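/- arXiv:2301.01654 — 9 statements merged into one kernel-verified Lean document; each statement's English description precedes it below -/
import Mathlib

section
/- For every M ∈ GL₃(F) and every (α, β) ∈ H_q, the denominator M₃₁α + M₃₂β + M₃₃ is nonzero, the pair M·(α, β) = ((M₁₁α + M₁₂β + M₁₃)/(M₃₁α + M₃₂β + M₃₃), (M₂₁α + M₂₂β + M₂₃)/(M₃₁α + M₃₂β + M₃₃)) again lies in H_q, and this operation defines a group action of GL₃(F) on H_q: the identity matrix acts trivially and (MN)·(α, β) = M·(N·(α, β)) for all M, N ∈ GL₃(F). -/
/-- The finite upper half-space: pairs `(α, β)` with `1, α, β` linearly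
independent over `F`. -/
def UHS (F : Type*) [Field F] (E : Type*) [Field E] [Algebra F E] : Set (E × E) :=
  {z | LinearIndependent F ![1, z.1, z.2]}

/-- The denominator of the fractional linear action. -/
def mden (F : Type*) [Field F] (E : Type*) [Field E] [Algebra F E]
    (M : Matrix (Fin 3) (Fin 3) F) (z : E × E) : E :=
  algebraMap F E (M 2 0) * z.1 + algebraMap F E (M 2 1) * z.2 + algebraMap F E (M 2 2)

/-- The fractional linear action of a `3 × 3` matrix on a pair. -/
def mact (F : Type*) [Field F] (E : Type*) [Field E] [Algebra F E]
    (M : Matrix (Fin 3) (Fin 3) F) (z : E × E) : E × E :=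
  ((algebraMap F E (M 0 0) * z.1 + algebraMap F E (M 0 1) * z.2 + algebraMap F E (M 0 2)) /
      mden F E M z,
   (algebraMap F E (M 1 0) * z.1 + algebraMap F E (M 1 1) * z.2 + algebraMap F E (M 1 2)) /
      mden F E M z)

lemma w_li (F : Type*) [Field F] (E : Type*) [Field E] [Algebra F E]
    (M : GL (Fin 3) F) (z : E × E) (hz : LinearIndependent F ![1, z.1, z.2]) :
    LinearIndependent F (fun i => algebraMap F E (M.val i 0) * z.1 +
      algebraMap F E (M.val i 1) * z.2 + algebraMap F E (M.val i 2)) := by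
  rw [Fintype.linearIndependent_iff]
  intro c hc
  have hd := Fintype.linearIndependent_iff.mp hz
    ![∑ i, c i * M.val i 2, ∑ i, c i * M.val i 0, ∑ i, c i * M.val i 1]
  have hsum : (∑ j, (![∑ i, c i * M.val i 2, ∑ i, c i * M.val i 0,
      ∑ i, c i * M.val i 1] : Fin 3 → F) j • (![1, z.1, z.2] : Fin 3 → E) j) = 0 := by
    simp only [Fin.sum_univ_three, Matrix.cons_val_zero, Matrix.cons_val_one, Matrix.head_cons,
      Matrix.cons_val_two, Matrix.tail_cons, Algebra.smul_def, map_add, map_mul] at hc ⊢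
    linear_combination hc
  have e0 := hd hsum 0
  have e1 := hd hsum 1
  have e2 := hd hsum 2
  simp only [Matrix.cons_val_zero, Matrix.cons_val_one, Matrix.head_cons, Matrix.cons_val_two,
    Matrix.tail_cons, Fin.sum_univ_three] at e0 e1 e2
  have hv : Matrix.vecMul c M.val = 0 := by
    funext j
    fin_cases j <;> simp [Matrix.vecMul, dotProduct, Fin.sum_univ_three, e0, e1, e2]
  have hcc : c = Matrix.vecMul (Matrix.vecMul c M.val) (M⁻¹).val := by
    rw [Matrix.vecMul_vecMul]
    norm_cast
    rw [mul_inv_cancel]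
    simp
  intro i
  rw [hcc, hv]
  simp

lemma key (F : Type*) [Field F] (E : Type*) [Field E] [Algebra F E]
    (M : GL (Fin 3) F) (z : E × E) (hz : z ∈ UHS F E) :
    mden F E M.val z ≠ 0 ∧ mact F E M.val z ∈ UHS F E := by
  have hw := w_li F E M z hz
  set w : Fin 3 → E := fun i => algebraMap F E (M.val i 0) * z.1 +
      algebraMap F E (M.val i 1) * z.2 + algebraMap F E (M.val i 2) with hwdef
  have hden : mden F E M.val z = w 2 := rfl
  have hne : w 2 ≠ 0 := hw.ne_zero 2
  refine ⟨hden ▸ hne, ?_⟩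
  rw [UHS, Set.mem_setOf_eq, Fintype.linearIndependent_iff]
  intro c hc
  have hact1 : (mact F E M.val z).1 = w 0 / w 2 := rfl
  have hact2 : (mact F E M.val z).2 = w 1 / w 2 := rfl
  rw [hact1, hact2] at hc
  simp only [Fin.sum_univ_three, Matrix.cons_val_zero, Matrix.cons_val_one, Matrix.head_cons,
    Matrix.cons_val_two, Matrix.tail_cons] at hc
  have hc2 : c 1 • w 0 + c 2 • w 1 + c 0 • w 2 = 0 := by
    have := congrArg (· * w 2) hc
    simp only [add_mul, smul_mul_assoc, div_mul_cancel₀ _ hne, zero_mul, mul_one, one_mul]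
      at this
    linear_combination this
  have hd := Fintype.linearIndependent_iff.mp hw ![c 1, c 2, c 0] (by
    simpa [Fin.sum_univ_three] using hc2)
  intro i
  fin_cases i
  · simpa using hd 2
  · simpa using hd 0
  · simpa using hd 1

theorem action_well_defined (F : Type*) [Field F] [Fintype F]
    (E : Type*) [Field E] [Algebra F E] (h3 : Module.finrank F E = 3) :
    (∀ M : GL (Fin 3) F, ∀ z ∈ UHS F E,
        mden F E M.val z ≠ 0 ∧ mact F E M.val z ∈ UHS F E) ∧
    (∀ z ∈ UHS F E, mact F E ((1 : GL (Fin 3) F) : Matrix (Fin 3) (Fin 3) F) z = z) ∧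
    (∀ M N : GL (Fin 3) F, ∀ z ∈ UHS F E,
        mact F E ((M * N : GL (Fin 3) F) : Matrix (Fin 3) (Fin 3) F) z =
          mact F E (M : Matrix (Fin 3) (Fin 3) F) (mact F E (N : Matrix (Fin 3) (Fin 3) F) z)) := by
  refine ⟨fun M z hz => key F E M z hz, ?_, ?_⟩
  · intro z hz
    simp [mact, mden, Matrix.one_apply]
  · intro M N z hz
    have hN := (key F E N z hz).1
    have hMN := (key F E (M * N) z hz).1
    have hM' := (key F E M (mact F E N.val z) (key F E N z hz).2).1
    have hdN : (algebraMap F E (N.val 2 0) * z.1 + algebraMap F E (N.val 2 1) * z.2 +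
        algebraMap F E (N.val 2 2)) ≠ 0 := hN
    set p := mact F E N.val z with hp
    refine Prod.ext ?_ ?_ <;>
    · simp only [mact]
      rw [div_eq_div_iff hMN hM']
      simp only [hp, mact, mden, Units.val_mul, Matrix.mul_apply, Fin.sum_univ_three,
        map_add, map_mul]
      field_simp
      ring
end

section
/- The stabilizer of the distinguished point p₀ = (d², d) under the action of GL₃(F) on H_q is exactly the set K of invertible matrices of the form [[a, cδ, bδ], [b, a, cδ], [c, b, a]] with a, b, c ∈ F; that is, M·p₀ = p₀ if and only if M has this form. -/
open Polynomial in
/-- If `δ` is not a cube in `F` and `d ^ 3 = δ`, then `1, d, d²` are linearly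
independent over `F`. -/
lemma li_aux (F : Type*) [Field F] (E : Type*) [Field E] [Algebra F E]
    (δ : F) (hδ : ¬∃ x : F, x ^ 3 = δ) (d : E) (hd : d ^ 3 = algebraMap F E δ)
    (x y z : F)
    (h : algebraMap F E x + algebraMap F E y * d + algebraMap F E z * d ^ 2 = 0) :
    x = 0 ∧ y = 0 ∧ z = 0 := by
  have hirr : Irreducible (X ^ 3 - C δ : F[X]) :=
    X_pow_sub_C_irreducible_of_prime (by norm_num) (fun b hb => hδ ⟨b, hb⟩)
  have haev : Polynomial.aeval d (X ^ 3 - C δ : F[X]) = 0 := by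
    simp [hd]
  have hmin : minpoly F d = X ^ 3 - C δ :=
    (minpoly.eq_of_irreducible_of_monic hirr haev (monic_X_pow_sub_C δ (by norm_num))).symm
  have hp : (C z * X ^ 2 + C y * X + C x : F[X]) = 0 := by
    by_contra hne
    have hle := minpoly.degree_le_of_ne_zero F d hne (by simp; linear_combination h)
    rw [hmin, degree_X_pow_sub_C (by norm_num)] at hle
    exact absurd (hle.trans degree_quadratic_le) (by norm_num)
  refine ⟨?_, ?_, ?_⟩
  · simpa using congrArg (fun p => Polynomial.coeff p 0) hp
  · simpa using congrArg (fun p => Polynomial.coeff p 1) hp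
  · simpa using congrArg (fun p => Polynomial.coeff p 2) hp

theorem stabilizer_of_base_point (F : Type*) [Field F] [Fintype F]
    (E : Type*) [Field E] [Algebra F E] (h3 : Module.finrank F E = 3)
    (δ : F) (hδ : ¬∃ x : F, x ^ 3 = δ) (d : E) (hd : d ^ 3 = algebraMap F E δ) :
    ∀ M : GL (Fin 3) F,
      mact F E M.val (d ^ 2, d) = (d ^ 2, d) ↔
        ∃ a b c : F, M.val = !![a, c * δ, b * δ; b, a, c * δ; c, b, a] := by
  intro M
  simp only [mact, mden]
  set f := algebraMap F E with hf
  have hδ0 : δ ≠ 0 := fun h => hδ ⟨0, by simp [h]⟩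
  have hd0 : d ≠ 0 := by
    intro h
    rw [h] at hd
    exact hδ0 ((_root_.map_eq_zero f).mp (by simpa using hd.symm))
  constructor
  · intro h
    have hden : f (M.val 2 0) * d ^ 2 + f (M.val 2 1) * d + f (M.val 2 2) ≠ 0 := by
      intro h0
      have h2 := congrArg Prod.snd h
      simp only [h0, div_zero] at h2
      exact hd0 h2.symm
    have h1 := congrArg Prod.fst h
    have h2 := congrArg Prod.snd h
    simp only at h1 h2
    rw [div_eq_iff hden] at h1 h2
    have e1 : f (M.val 0 2 - M.val 2 1 * δ) + f (M.val 0 1 - M.val 2 0 * δ) * d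
        + f (M.val 0 0 - M.val 2 2) * d ^ 2 = 0 := by
      simp only [map_sub, map_mul]
      linear_combination h1 + (f (M.val 2 1) + f (M.val 2 0) * d) * hd
    have e2 : f (M.val 1 2 - M.val 2 0 * δ) + f (M.val 1 1 - M.val 2 2) * d
        + f (M.val 1 0 - M.val 2 1) * d ^ 2 = 0 := by
      simp only [map_sub, map_mul]
      linear_combination h2 + f (M.val 2 0) * hd
    obtain ⟨q1, q2, q3⟩ := li_aux F E δ hδ d hd _ _ _ e1
    obtain ⟨r1, r2, r3⟩ := li_aux F E δ hδ d hd _ _ _ e2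
    refine ⟨M.val 2 2, M.val 2 1, M.val 2 0, ?_⟩
    ext i j
    fin_cases i <;> fin_cases j <;>
      simp <;>
      first
        | rfl
        | exact sub_eq_zero.mp q1
        | exact sub_eq_zero.mp q2
        | exact sub_eq_zero.mp q3
        | exact sub_eq_zero.mp r1
        | exact sub_eq_zero.mp r2
        | exact sub_eq_zero.mp r3
  · rintro ⟨a, b, c, hM⟩
    have e00 : M.val 0 0 = a := by rw [hM]; simp
    have e01 : M.val 0 1 = c * δ := by rw [hM]; simp
    have e02 : M.val 0 2 = b * δ := by rw [hM]; simp
    have e10 : M.val 1 0 = b := by rw [hM]; simp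
    have e11 : M.val 1 1 = a := by rw [hM]; simp
    have e12 : M.val 1 2 = c * δ := by rw [hM]; simp
    have e20 : M.val 2 0 = c := by rw [hM]; simp
    have e21 : M.val 2 1 = b := by rw [hM]; simp
    have e22 : M.val 2 2 = a := by rw [hM]; simp
    rw [e00, e01, e02, e10, e11, e12, e20, e21, e22]
    have hden : f c * d ^ 2 + f b * d + f a ≠ 0 := by
      intro h0
      obtain ⟨ha, hb, hc⟩ := li_aux F E δ hδ d hd a b c (by linear_combination h0)
      have hmul : (M.val * (↑(M⁻¹) : Matrix (Fin 3) (Fin 3) F)) 0 0 = 1 := by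
        rw [M.mul_inv]; simp
      rw [Matrix.mul_apply, Fin.sum_univ_three, e00, e01, e02, ha, hb, hc] at hmul
      simp at hmul
    refine Prod.ext ?_ ?_
    · simp only
      rw [div_eq_iff hden]
      simp only [map_mul]
      linear_combination -(f c * d + f b) * hd
    · simp only
      rw [div_eq_iff hden]
      simp only [map_mul]
      linear_combination -(f c) * hd
end

section
/- Let V = {φ : G → ℂ : φ(γg) = φ(g) for all γ ∈ Γ, g ∈ G} be the ℂ-vector space of left-Γ-invariant functions on G, and for f : G → ℂ define the linear operator T_f on functions by (T_f φ)(x) = Σ_{y∈G} f(y)·φ(xy⁻¹). Then T_f maps V into V, and its trace as a linear endomorphism of V equals (1/|Γ|) · Σ_{x∈G} Σ_{γ∈Γ} f(x⁻¹γx). -/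
/-- The space of left-`Γ`-invariant complex-valued functions on `G`. -/
noncomputable def invariantFunctions (G : Type*) [Group G] (Γ : Subgroup G) : Submodule ℂ (G → ℂ) where
  carrier := {φ | ∀ γ ∈ Γ, ∀ g : G, φ (γ * g) = φ g}
  add_mem' := by
    intro φ ψ hφ hψ γ hγ g
    simp [hφ γ hγ g, hψ γ hγ g]
  zero_mem' := by
    intro γ hγ g
    rfl
  smul_mem' := by
    intro c φ hφ γ hγ g
    simp [hφ γ hγ g]

theorem trace_on_invariants (G : Type*) [Group G] [Fintype G]
    (Γ : Subgroup G) [Fintype Γ] (f : G → ℂ) :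
    ∃ S : invariantFunctions G Γ →ₗ[ℂ] invariantFunctions G Γ,
      (∀ φ : invariantFunctions G Γ, ∀ x : G,
          (S φ : G → ℂ) x = ∑ y : G, f y * (φ : G → ℂ) (x * y⁻¹)) ∧
      LinearMap.trace ℂ (invariantFunctions G Γ) S =
        (1 / (Nat.card Γ : ℂ)) * ∑ x : G, ∑ γ : Γ, f (x⁻¹ * (γ : G) * x) := by
  classical
  set V := invariantFunctions G Γ
  -- the full convolution operator on all functions
  set T : (G → ℂ) →ₗ[ℂ] (G → ℂ) :=
    { toFun := fun φ x => ∑ y : G, f y * φ (x * y⁻¹)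
      map_add' := by
        intro φ ψ; funext x
        simp [mul_add, Finset.sum_add_distrib]
      map_smul' := by
        intro c φ; funext x
        simp [Finset.mul_sum, mul_left_comm] } with hT
  -- the averaging projection onto V
  set P : (G → ℂ) →ₗ[ℂ] (G → ℂ) :=
    { toFun := fun φ g => (Nat.card Γ : ℂ)⁻¹ * ∑ γ : Γ, φ ((γ : G) * g)
      map_add' := by
        intro φ ψ; funext g
        simp [Finset.sum_add_distrib, mul_add]
      map_smul' := by
        intro c φ; funext g
        simp [Finset.mul_sum, mul_left_comm] } with hP
  have hTmem : ∀ φ ∈ V, T φ ∈ V := by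
    intro φ hφ γ hγ g
    simp only [hT, LinearMap.coe_mk, AddHom.coe_mk]
    refine Finset.sum_congr rfl fun y _ => ?_
    rw [mul_assoc, hφ γ hγ (g * y⁻¹)]
  have hPmem : ∀ φ, P φ ∈ V := by
    intro φ γ hγ g
    simp only [hP, LinearMap.coe_mk, AddHom.coe_mk]
    congr 1
    exact Fintype.sum_equiv (Equiv.mulRight (⟨γ, hγ⟩ : Γ)) _ _ (by
      intro δ
      simp [mul_assoc])
  set ι : V →ₗ[ℂ] (G → ℂ) := V.subtype with hι
  set π : (G → ℂ) →ₗ[ℂ] V := P.codRestrict V hPmem with hπ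
  set S : V →ₗ[ℂ] V := (T.comp ι).codRestrict V (fun φ => hTmem φ φ.2) with hS
  have hcard : (Nat.card Γ : ℂ) ≠ 0 := by
    simp [Nat.card_eq_fintype_card, Fintype.card_ne_zero]
  have hπι : π.comp ι = LinearMap.id := by
    ext φ g
    simp only [hπ, hι, LinearMap.comp_apply, LinearMap.codRestrict_apply,
      Submodule.subtype_apply, LinearMap.id_apply, hP, LinearMap.coe_mk, AddHom.coe_mk]
    have : ∀ γ : Γ, (φ : G → ℂ) ((γ : G) * g) = (φ : G → ℂ) g := fun γ => φ.2 γ γ.2 g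
    rw [Finset.sum_congr rfl (fun γ _ => this γ), Finset.sum_const]
    simp [Nat.card_eq_fintype_card]
  refine ⟨S, fun φ x => rfl, ?_⟩
  -- reduce trace on V to trace on the full function space
  have key : LinearMap.trace ℂ V S = LinearMap.trace ℂ (G → ℂ) ((ι.comp S).comp π) := by
    have h1 : S = π.comp (ι.comp S) := by
      rw [← LinearMap.comp_assoc, hπι, LinearMap.id_comp]
    conv_lhs => rw [h1]
    exact LinearMap.trace_comp_comm' (ι.comp S) π
  rw [key, LinearMap.trace_eq_matrix_trace ℂ (Pi.basisFun ℂ G)]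
  rw [Matrix.trace]
  simp only [Matrix.diag_apply]
  have hdiag : ∀ x : G,
      (LinearMap.toMatrix (Pi.basisFun ℂ G) (Pi.basisFun ℂ G) ((ι.comp S).comp π)) x x
        = (Nat.card Γ : ℂ)⁻¹ * ∑ γ : Γ, f (x⁻¹ * (γ : G) * x) := by
    intro x
    rw [LinearMap.toMatrix_apply]
    simp only [Pi.basisFun_apply, Pi.basisFun_repr]
    show (T (P ((Pi.single x 1 : G → ℂ)))) x = _
    simp only [hT, hP, LinearMap.coe_mk, AddHom.coe_mk]
    have step : ∀ y : G, f y * ((Nat.card Γ : ℂ)⁻¹ * ∑ γ : Γ, (Pi.single x 1 : G → ℂ) ((γ : G) * (x * y⁻¹)))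
        = (Nat.card Γ : ℂ)⁻¹ * ∑ γ : Γ, f y * (Pi.single x 1 : G → ℂ) ((γ : G) * (x * y⁻¹)) := by
      intro y
      simp only [Finset.mul_sum]
      exact Finset.sum_congr rfl fun γ _ => by ring
    rw [Finset.sum_congr rfl fun y _ => step y, ← Finset.mul_sum, Finset.sum_comm]
    congr 1
    refine Finset.sum_congr rfl fun γ _ => ?_
    have : ∀ y : G, f y * (Pi.single x 1 : G → ℂ) ((γ : G) * (x * y⁻¹))
        = if y = x⁻¹ * (γ : G) * x then f y else 0 := by
      intro y
      rw [Pi.single_apply]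
      have hiff : ((γ : G) * (x * y⁻¹) = x) ↔ (y = x⁻¹ * (γ : G) * x) := by
        rw [← mul_assoc, mul_inv_eq_iff_eq_mul]
        constructor
        · intro h
          have h2 : y = x⁻¹ * (x * y) := by group
          rw [h2, ← h]; group
        · intro h
          rw [h]; group
      by_cases h : y = x⁻¹ * (γ : G) * x
      · simp [h, hiff.mpr h]
      · have : ¬ ((γ : G) * (x * y⁻¹) = x) := fun hc => h (hiff.mp hc)
        simp [h, this]
    rw [Finset.sum_congr rfl fun y _ => this y, Finset.sum_ite_eq' Finset.univ]
    simp
  rw [Finset.sum_congr rfl fun x _ => hdiag x, ← Finset.mul_sum, one_div]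
end

section
/- Let G be a finite group with center Z, and let H, K be subgroups of G with Z ≤ H and Z ≤ K. Suppose that for every t ∈ G one has tHt⁻¹ ∩ K = Z. Then the number of right cosets of H in G equals the number of (H, K)-double cosets times the index of Z in K: |H\G| = |H\G/K| · (|K|/|Z|). Equivalently, the map sending a pair (HtK, kZ) to the right coset Htk is a well-defined bijection from (H\G/K) × (K/Z) onto H\G. -/
private lemma aux_center_inv_mul {G : Type*} [Group G] {a b : G}
    (h : b * a⁻¹ ∈ Subgroup.center G) : a⁻¹ * b ∈ Subgroup.center G := by
  have hc := (Subgroup.mem_center_iff.mp h) a⁻¹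
  have he : a⁻¹ * b = b * a⁻¹ := by
    calc a⁻¹ * b = a⁻¹ * (b * a⁻¹) * a := by group
    _ = (b * a⁻¹) * a⁻¹ * a := by rw [hc]
    _ = b * a⁻¹ := by group
  rwa [he]

private lemma aux_center_mul_inv {G : Type*} [Group G] {a b : G}
    (h : a⁻¹ * b ∈ Subgroup.center G) : b * a⁻¹ ∈ Subgroup.center G := by
  have hc := (Subgroup.mem_center_iff.mp h) a
  have he : b * a⁻¹ = a⁻¹ * b := by
    calc b * a⁻¹ = a * (a⁻¹ * b) * a⁻¹ := by group
    _ = (a⁻¹ * b) * a * a⁻¹ := by rw [hc]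
    _ = a⁻¹ * b := by group
  rwa [he]

theorem card_right_cosets_eq_card_double_cosets_mul (G : Type*) [Group G] [Fintype G]
    (H K : Subgroup G)
    (hH : Subgroup.center G ≤ H) (hK : Subgroup.center G ≤ K)
    (hInt : ∀ t : G, Subgroup.map (MulAut.conj t).toMonoidHom H ⊓ K = Subgroup.center G) :
    Nat.card (Quotient (QuotientGroup.rightRel H)) =
      Nat.card (DoubleCoset.Quotient (H : Set G) (K : Set G)) *
        ((Subgroup.center G).relIndex K) := by
  classical
  set Z := Subgroup.center G with hZ
  -- key: for t : G and k k' ∈ K, H t k = H t k' ↔ k' k⁻¹ ∈ Z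
  have key : ∀ (t : G) (k k' : K),
      (Quotient.mk (QuotientGroup.rightRel H) (t * k) =
        Quotient.mk (QuotientGroup.rightRel H) (t * k')) ↔ ((k' : G) * (k : G)⁻¹ ∈ Z) := by
    intro t k k'
    constructor
    · intro h
      have h1 : (t * (k' : G)) * (t * (k : G))⁻¹ ∈ H :=
        QuotientGroup.rightRel_apply.mp (Quotient.exact h)
      have h2 : t * ((k' : G) * (k : G)⁻¹) * t⁻¹ ∈ H := by
        simpa [mul_assoc] using h1
      have hmem : (k' : G) * (k : G)⁻¹ ∈ Subgroup.map (MulAut.conj t⁻¹).toMonoidHom H ⊓ K := by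
        constructor
        · refine ⟨t * ((k' : G) * (k : G)⁻¹) * t⁻¹, h2, ?_⟩
          simp [MulAut.conj, mul_assoc]
        · exact K.mul_mem k'.2 (K.inv_mem k.2)
      rwa [hInt t⁻¹] at hmem
    · intro h
      have h2 : t * ((k' : G) * (k : G)⁻¹) * t⁻¹ ∈ H := by
        have hc := (Subgroup.mem_center_iff.mp h) t
        have he : t * ((k' : G) * (k : G)⁻¹) * t⁻¹ = (k' : G) * (k : G)⁻¹ := by
          rw [hc]; group
        rw [he]; exact hH h
      refine Quotient.sound (QuotientGroup.rightRel_apply.mpr ?_)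
      show (t * (k' : G)) * (t * (k : G))⁻¹ ∈ H
      simpa [mul_assoc] using h2
  -- projection from right cosets to dosets
  let φ : Quotient (QuotientGroup.rightRel H) → DoubleCoset.Quotient (H : Set G) (K : Set G) :=
    Quotient.lift (fun g => DoubleCoset.mk H K g) (by
      intro a b hab
      have hab' : b * a⁻¹ ∈ H := QuotientGroup.rightRel_apply.mp hab
      exact (DoubleCoset.eq H K a b).mpr ⟨b * a⁻¹, hab', 1, K.one_mem, by group⟩)
  -- each fiber of φ is equivalent to K ⧸ Z.subgroupOf K
  have fiber_equiv : ∀ d : DoubleCoset.Quotient (H : Set G) (K : Set G),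
      Nonempty ((K ⧸ Z.subgroupOf K) ≃ {x // φ x = d}) := by
    intro d
    set t := Quotient.out d with ht
    have hout : DoubleCoset.mk H K t = d := DoubleCoset.out_eq' H K d
    let f : K ⧸ Z.subgroupOf K → {x // φ x = d} :=
      Quotient.lift (fun k : K => ⟨Quotient.mk _ (t * k), by
        show DoubleCoset.mk H K (t * (k : G)) = d
        rw [← hout]
        exact (DoubleCoset.eq H K (t * (k : G)) t).mpr ⟨1, H.one_mem, k⁻¹,
          K.inv_mem k.2, by group⟩⟩)
        (by
          intro a b hab
          have hab' : (a : G)⁻¹ * b ∈ Z := by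
            have := QuotientGroup.leftRel_apply.mp hab
            rwa [Subgroup.mem_subgroupOf] at this
          exact Subtype.ext ((key t a b).mpr (aux_center_mul_inv hab')))
    have hbij : Function.Bijective f := by
      constructor
      · intro a b hab
        induction a using Quotient.inductionOn with | _ a =>
        induction b using Quotient.inductionOn with | _ b =>
        have heq : (Quotient.mk (QuotientGroup.rightRel H) (t * a) =
            Quotient.mk (QuotientGroup.rightRel H) (t * b)) := by
          simpa [f] using congrArg Subtype.val hab
        have hz : (b : G) * (a : G)⁻¹ ∈ Z := (key t a b).mp heq
        apply Quotient.sound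
        refine QuotientGroup.leftRel_apply.mpr ?_
        rw [Subgroup.mem_subgroupOf]
        exact aux_center_inv_mul hz
      · rintro ⟨x, hx⟩
        induction x using Quotient.inductionOn with | _ g =>
        have hgd : DoubleCoset.mk H K g = DoubleCoset.mk H K t := by rw [hout]; exact hx
        obtain ⟨h, hh, k, hk, hgt⟩ := (DoubleCoset.eq H K g t).mp hgd
        refine ⟨Quotient.mk _ ⟨k, hk⟩⁻¹, ?_⟩
        apply Subtype.ext
        show Quotient.mk (QuotientGroup.rightRel H) (t * k⁻¹) =
          Quotient.mk (QuotientGroup.rightRel H) g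
        apply Quotient.sound
        refine QuotientGroup.rightRel_apply.mpr ?_
        show g * (t * k⁻¹)⁻¹ ∈ H
        have he : g * (t * k⁻¹)⁻¹ = h⁻¹ := by rw [hgt]; group
        rw [he]; exact H.inv_mem hh
    exact ⟨Equiv.ofBijective f hbij⟩
  calc Nat.card (Quotient (QuotientGroup.rightRel H))
      = Nat.card (Σ d : DoubleCoset.Quotient (H : Set G) (K : Set G), {x // φ x = d}) :=
        Nat.card_congr (Equiv.sigmaFiberEquiv φ).symm
    _ = Nat.card ((DoubleCoset.Quotient (H : Set G) (K : Set G)) × (K ⧸ Z.subgroupOf K)) :=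
        Nat.card_congr ((Equiv.sigmaCongrRight fun d => (fiber_equiv d).some.symm).trans
          (Equiv.sigmaEquivProd _ _))
    _ = Nat.card (DoubleCoset.Quotient (H : Set G) (K : Set G)) * Nat.card (K ⧸ Z.subgroupOf K) :=
        Nat.card_prod _ _
    _ = Nat.card (DoubleCoset.Quotient (H : Set G) (K : Set G)) * Z.relIndex K := rfl
end

section
/- Let a, b ∈ F× with a ≠ b and let T be the subgroup of GL₃(F) consisting of invertible matrices of the form [[x, y, 0], [w, z, 0], [0, 0, t]] (with xz − yw ≠ 0 and t ≠ 0); T is the centralizer in GL₃(F) of the matrix diag(a, a, b). Then the set {(u + d, v + d²) : u, v ∈ F} is a fundamental domain for the action of T on H_q: for every (α, β) ∈ H_q there exists a unique pair (u, v) ∈ F × F such that (α, β) lies in the T-orbit of (u + d, v + d²). -/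
open Polynomial

section aux
variable {F : Type*} [Field F] {E : Type*} [Field E] [Algebra F E]

lemma coords_eq {d : E} (hLI : LinearIndependent F ![1, d, d ^ 2]) {p0 p1 p2 q0 q1 q2 : F}
    (h : algebraMap F E p0 + algebraMap F E p1 * d + algebraMap F E p2 * d ^ 2
       = algebraMap F E q0 + algebraMap F E q1 * d + algebraMap F E q2 * d ^ 2) :
    p0 = q0 ∧ p1 = q1 ∧ p2 = q2 := by
  have hg := Fintype.linearIndependent_iff.mp hLI ![p0 - q0, p1 - q1, p2 - q2] ?_
  · exact ⟨sub_eq_zero.mp (hg 0), sub_eq_zero.mp (hg 1), sub_eq_zero.mp (hg 2)⟩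
  · simp only [Fin.sum_univ_three, Matrix.cons_val_zero, Matrix.cons_val_one, Matrix.head_cons,
      Matrix.cons_val_two, Matrix.tail_cons, Algebra.smul_def, map_sub]
    linear_combination h

lemma d_li (h3 : Module.finrank F E = 3) {δ : F} (hδ : ¬∃ x : F, x ^ 3 = δ)
    {d : E} (hd : d ^ 3 = algebraMap F E δ) : LinearIndependent F ![1, d, d ^ 2] := by
  have hfd : FiniteDimensional F E := FiniteDimensional.of_finrank_pos (by omega)
  have hirr : Irreducible (X ^ 3 - C δ) :=
    X_pow_sub_C_irreducible_of_prime (by norm_num) (fun b hb => hδ ⟨b, hb⟩)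
  have hint : IsIntegral F d := Algebra.IsIntegral.isIntegral d
  have hmin : minpoly F d = X ^ 3 - C δ := by
    refine (minpoly.eq_of_irreducible_of_monic hirr ?_ ?_).symm
    · simp [hd]
    · exact monic_X_pow_sub_C δ (by norm_num)
  rw [Fintype.linearIndependent_iff]
  intro g hg
  set P : F[X] := C (g 0) + C (g 1) * X + C (g 2) * X ^ 2 with hP
  have haev : (aeval d) P = 0 := by
    simp only [hP, map_add, map_mul, aeval_C, aeval_X, map_pow]
    simpa only [Fin.sum_univ_three, Matrix.cons_val_zero, Matrix.cons_val_one, Matrix.head_cons,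
      Matrix.cons_val_two, Matrix.tail_cons, Algebra.smul_def, mul_one] using hg
  have hP0 : P = 0 := by
    by_contra hne
    have hle := minpoly.degree_le_of_ne_zero F d hne haev
    rw [hmin, degree_X_pow_sub_C (by norm_num)] at hle
    have : P.degree ≤ 2 := by rw [hP]; compute_degree
    exact absurd (le_trans hle this) (by norm_num)
  intro i
  fin_cases i
  · simpa [hP, coeff_add, coeff_C, coeff_C_mul, coeff_X, coeff_X_pow] using
      congrArg (fun p => coeff p 0) hP0
  · simpa [hP, coeff_add, coeff_C, coeff_C_mul, coeff_X, coeff_X_pow] using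
      congrArg (fun p => coeff p 1) hP0
  · simpa [hP, coeff_add, coeff_C, coeff_C_mul, coeff_X, coeff_X_pow] using
      congrArg (fun p => coeff p 2) hP0

lemma exists_coords (h3 : Module.finrank F E = 3) {d : E}
    (hLI : LinearIndependent F ![1, d, d ^ 2]) (e : E) :
    ∃ c0 c1 c2 : F, e = algebraMap F E c0 + algebraMap F E c1 * d + algebraMap F E c2 * d ^ 2 := by
  have hcard : Fintype.card (Fin 3) = Module.finrank F E := by simp [h3]
  let B := basisOfLinearIndependentOfCardEqFinrank hLI hcard
  refine ⟨B.repr e 0, B.repr e 1, B.repr e 2, ?_⟩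
  conv_lhs => rw [← B.sum_repr e]
  simp [B, coe_basisOfLinearIndependentOfCardEqFinrank, Fin.sum_univ_three, Algebra.smul_def]

lemma det2_ne {d α β : E} {a0 a1 a2 b0 b1 b2 : F}
    (hα : α = algebraMap F E a0 + algebraMap F E a1 * d + algebraMap F E a2 * d ^ 2)
    (hβ : β = algebraMap F E b0 + algebraMap F E b1 * d + algebraMap F E b2 * d ^ 2)
    (hz : LinearIndependent F ![1, α, β]) : a1 * b2 - a2 * b1 ≠ 0 := by
  intro hdet
  have hdet' : algebraMap F E a1 * algebraMap F E b2 - algebraMap F E a2 * algebraMap F E b1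
      = 0 := by
    rw [← map_mul, ← map_mul, ← map_sub, hdet, map_zero]
  rw [Fintype.linearIndependent_iff] at hz
  by_cases h2 : a1 = 0 ∧ a2 = 0
  · have := hz ![a0, -1, 0] ?_ 1
    · simp at this
    · simp only [Fin.sum_univ_three, Matrix.cons_val_zero, Matrix.cons_val_one, Matrix.head_cons,
        Matrix.cons_val_two, Matrix.tail_cons, Algebra.smul_def, map_neg, map_zero, map_one]
      rw [hα, h2.1, h2.2]
      simp
  · rcases not_and_or.mp h2 with h1 | h1
    · have := hz ![a1 * b0 - b1 * a0, b1, -a1] ?_ 2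
      · simp only [Matrix.cons_val_two, Matrix.tail_cons, Matrix.head_cons, neg_eq_zero] at this
        exact h1 this
      · simp only [Fin.sum_univ_three, Matrix.cons_val_zero, Matrix.cons_val_one, Matrix.head_cons,
          Matrix.cons_val_two, Matrix.tail_cons, Algebra.smul_def, map_neg, map_sub, map_mul]
        rw [hα, hβ]
        linear_combination (-(d ^ 2)) * hdet'
    · have := hz ![a2 * b0 - b2 * a0, b2, -a2] ?_ 2
      · simp only [Matrix.cons_val_two, Matrix.tail_cons, Matrix.head_cons, neg_eq_zero] at this
        exact h1 this
      · simp only [Fin.sum_univ_three, Matrix.cons_val_zero, Matrix.cons_val_one, Matrix.head_cons,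
          Matrix.cons_val_two, Matrix.tail_cons, Algebra.smul_def, map_neg, map_sub, map_mul]
        rw [hα, hβ]
        linear_combination d * hdet'

end aux

theorem fundamental_domain_first_hyperbolic (F : Type*) [Field F] [Fintype F]
    (E : Type*) [Field E] [Algebra F E] (h3 : Module.finrank F E = 3)
    (δ : F) (hδ : ¬∃ x : F, x ^ 3 = δ) (d : E) (hd : d ^ 3 = algebraMap F E δ)
    (a b : F) (ha : a ≠ 0) (hb : b ≠ 0) (hab : a ≠ b) :
    (∀ m : GL (Fin 3) F,
        m.val * !![a, 0, 0; 0, a, 0; 0, 0, b] = !![a, 0, 0; 0, a, 0; 0, 0, b] * m.val ↔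
        (m.val 0 2 = 0 ∧ m.val 1 2 = 0 ∧ m.val 2 0 = 0 ∧ m.val 2 1 = 0)) ∧
    ∀ z ∈ UHS F E, ∃! uv : F × F, ∃ m : GL (Fin 3) F,
      (m.val 0 2 = 0 ∧ m.val 1 2 = 0 ∧ m.val 2 0 = 0 ∧ m.val 2 1 = 0) ∧
      mact F E m.val (algebraMap F E uv.1 + d, algebraMap F E uv.2 + d ^ 2) = z := by
  constructor
  · intro m
    have hba : b - a ≠ 0 := sub_ne_zero.mpr (Ne.symm hab)
    have hab' : a - b ≠ 0 := sub_ne_zero.mpr hab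
    constructor
    · intro h
      have h02 := congrFun (congrFun h 0) 2
      have h12 := congrFun (congrFun h 1) 2
      have h20 := congrFun (congrFun h 2) 0
      have h21 := congrFun (congrFun h 2) 1
      simp [Matrix.mul_apply, Fin.sum_univ_three, Matrix.vecHead, Matrix.vecTail]
        at h02 h12 h20 h21
      refine ⟨?_, ?_, ?_, ?_⟩
      · have : m.val 0 2 * (b - a) = 0 := by linear_combination h02
        exact (mul_eq_zero.mp this).resolve_right hba
      · have : m.val 1 2 * (b - a) = 0 := by linear_combination h12
        exact (mul_eq_zero.mp this).resolve_right hba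
      · have : m.val 2 0 * (a - b) = 0 := by linear_combination h20
        exact (mul_eq_zero.mp this).resolve_right hab'
      · have : m.val 2 1 * (a - b) = 0 := by linear_combination h21
        exact (mul_eq_zero.mp this).resolve_right hab'
    · rintro ⟨h1, h2, h3', h4⟩
      ext i j
      fin_cases i <;> fin_cases j <;>
        simp [Matrix.mul_apply, Fin.sum_univ_three, Matrix.vecHead, Matrix.vecTail,
          h1, h2, h3', h4] <;> ring
  · intro z hz
    have hLI := d_li h3 hδ hd
    obtain ⟨a0, a1, a2, hα⟩ := exists_coords h3 hLI z.1
    obtain ⟨b0, b1, b2, hβ⟩ := exists_coords h3 hLI z.2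
    have hdet : a1 * b2 - a2 * b1 ≠ 0 := det2_ne hα hβ hz
    set u : F := (a0 * b2 - a2 * b0) / (a1 * b2 - a2 * b1) with hu_def
    set v : F := (a1 * b0 - a0 * b1) / (a1 * b2 - a2 * b1) with hv_def
    have hu : a1 * u + a2 * v = a0 := by
      rw [hu_def, hv_def]; field_simp; ring
    have hv : b1 * u + b2 * v = b0 := by
      rw [hu_def, hv_def, mul_div_assoc', mul_div_assoc', ← add_div, div_eq_iff hdet]; ring
    -- key: any pair in the set satisfies the linear system
    have key : ∀ u' v' : F,
        (∃ m : GL (Fin 3) F,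
          (m.val 0 2 = 0 ∧ m.val 1 2 = 0 ∧ m.val 2 0 = 0 ∧ m.val 2 1 = 0) ∧
          mact F E m.val (algebraMap F E u' + d, algebraMap F E v' + d ^ 2) = z) →
        a1 * u' + a2 * v' = a0 ∧ b1 * u' + b2 * v' = b0 := by
      rintro u' v' ⟨m, ⟨h02, h12, h20, h21⟩, heq⟩
      have hdm : m.val.det ≠ 0 :=
        isUnit_iff_ne_zero.mp ((Matrix.isUnit_iff_isUnit_det _).mp ⟨m, rfl⟩)
      have ht : m.val 2 2 ≠ 0 := by
        intro h
        apply hdm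
        rw [Matrix.det_fin_three, h02, h12, h20, h21, h]
        ring
      have hden : mden F E m.val (algebraMap F E u' + d, algebraMap F E v' + d ^ 2)
          = algebraMap F E (m.val 2 2) := by
        rw [mden, h20, h21]; simp
      have htE : algebraMap F E (m.val 2 2) ≠ 0 := by
        simpa using (map_ne_zero (algebraMap F E)).mpr ht
      have heq1 := congrArg Prod.fst heq
      have heq2 := congrArg Prod.snd heq
      simp only [mact, hden] at heq1 heq2
      rw [div_eq_iff htE] at heq1 heq2
      rw [h02, map_zero, add_zero] at heq1
      rw [h12, map_zero, add_zero] at heq2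
      have e1 : algebraMap F E (m.val 0 0 * u' + m.val 0 1 * v')
            + algebraMap F E (m.val 0 0) * d + algebraMap F E (m.val 0 1) * d ^ 2
          = algebraMap F E (a0 * m.val 2 2) + algebraMap F E (a1 * m.val 2 2) * d
            + algebraMap F E (a2 * m.val 2 2) * d ^ 2 := by
        simp only [map_add, map_mul, map_zero]
        rw [hα] at heq1
        linear_combination heq1
      have e2 : algebraMap F E (m.val 1 0 * u' + m.val 1 1 * v')
            + algebraMap F E (m.val 1 0) * d + algebraMap F E (m.val 1 1) * d ^ 2
          = algebraMap F E (b0 * m.val 2 2) + algebraMap F E (b1 * m.val 2 2) * d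
            + algebraMap F E (b2 * m.val 2 2) * d ^ 2 := by
        simp only [map_add, map_mul, map_zero]
        rw [hβ] at heq2
        linear_combination heq2
      obtain ⟨ec1, ed1, edd1⟩ := coords_eq hLI e1
      obtain ⟨ec2, ed2, edd2⟩ := coords_eq hLI e2
      constructor
      · have hh : (a1 * u' + a2 * v') * m.val 2 2 = a0 * m.val 2 2 := by
          linear_combination ec1 - u' * ed1 - v' * edd1
        exact mul_right_cancel₀ ht hh
      · have hh : (b1 * u' + b2 * v') * m.val 2 2 = b0 * m.val 2 2 := by
          linear_combination ec2 - u' * ed2 - v' * edd2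
        exact mul_right_cancel₀ ht hh
    refine ⟨(u, v), ?_, ?_⟩
    · -- existence
      set M : Matrix (Fin 3) (Fin 3) F := !![a1, a2, 0; b1, b2, 0; 0, 0, 1] with hM
      have hMdet : M.det = a1 * b2 - a2 * b1 := by
        rw [hM, Matrix.det_fin_three]; simp
      have hMunit : IsUnit M.det := by
        rw [hMdet]; exact isUnit_iff_ne_zero.mpr hdet
      refine ⟨Matrix.nonsingInvUnit M hMunit, ?_, ?_⟩
      · refine ⟨?_, ?_, ?_, ?_⟩ <;> simp [Matrix.nonsingInvUnit, hM]
      · have hval : (Matrix.nonsingInvUnit M hMunit).val = M := rfl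
        have hM00 : M 0 0 = a1 := by simp [hM]
        have hM01 : M 0 1 = a2 := by simp [hM]
        have hM02 : M 0 2 = 0 := by simp [hM]
        have hM10 : M 1 0 = b1 := by simp [hM]
        have hM11 : M 1 1 = b2 := by simp [hM]
        have hM12 : M 1 2 = 0 := by simp [hM]
        rw [hval]
        have hden : mden F E M (algebraMap F E u + d, algebraMap F E v + d ^ 2) = 1 := by
          rw [mden, hM]; simp
        have hu' : algebraMap F E a1 * algebraMap F E u + algebraMap F E a2 * algebraMap F E v
            = algebraMap F E a0 := by
          rw [← map_mul, ← map_mul, ← map_add, hu]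
        have hv' : algebraMap F E b1 * algebraMap F E u + algebraMap F E b2 * algebraMap F E v
            = algebraMap F E b0 := by
          rw [← map_mul, ← map_mul, ← map_add, hv]
        rw [mact, hden]
        refine Prod.ext ?_ ?_
        · show (algebraMap F E (M 0 0) * (algebraMap F E u + d)
              + algebraMap F E (M 0 1) * (algebraMap F E v + d ^ 2)
              + algebraMap F E (M 0 2)) / 1 = z.1
          rw [hM00, hM01, hM02, map_zero, add_zero, div_one, hα]
          linear_combination hu'
        · show (algebraMap F E (M 1 0) * (algebraMap F E u + d)
              + algebraMap F E (M 1 1) * (algebraMap F E v + d ^ 2)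
              + algebraMap F E (M 1 2)) / 1 = z.2
          rw [hM10, hM11, hM12, map_zero, add_zero, div_one, hβ]
          linear_combination hv'
    · -- uniqueness
      rintro ⟨u', v'⟩ hm
      obtain ⟨k1, k2⟩ := key u' v' hm
      have hu'' : u' = u := by
        rw [hu_def, eq_div_iff hdet]
        linear_combination b2 * k1 - a2 * k2
      have hv'' : v' = v := by
        rw [hv_def, eq_div_iff hdet]
        linear_combination a1 * k2 - b1 * k1
      simp [hu'', hv'']
end

section
/- Let G_γ be the subgroup of GL₃(F) consisting of invertible matrices of the form [[t, y, x], [0, c, b], [0, 0, t]] with t, c ∈ F× and b, x, y ∈ F (this is the centralizer in GL₃(F) of the matrix [[a, 0, a], [0, a, 0], [0, 0, a]] for a ∈ F×). Then the set {(u·d, v·d + d²) : u ∈ F×, v ∈ F} ∪ {(d + u·d², d) : u ∈ F×} is a fundamental domain for the action of G_γ on H_q: every (α, β) ∈ H_q lies in the G_γ-orbit of exactly one element of this set. -/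
section FDaux

variable {F : Type*} [Field F] {E : Type*} [Field E] [Algebra F E]

lemma fd_algne (x : F) (hx : x ≠ 0) : algebraMap F E x ≠ 0 :=
  fun h0 => hx ((algebraMap F E).injective (by rw [h0, map_zero]))

lemma fd_LI (δ : F) (hδ : ¬∃ x : F, x ^ 3 = δ) (d : E)
    (hd : d ^ 3 = algebraMap F E δ) : LinearIndependent F ![(1:E), d, d^2] := by
  have ha : ∀ b : F, b ^ 3 ≠ δ := fun b hb => hδ ⟨b, hb⟩
  have hirr : Irreducible (Polynomial.X ^ 3 - Polynomial.C δ) :=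
    X_pow_sub_C_irreducible_of_prime Nat.prime_three ha
  have hroot : Polynomial.aeval d (Polynomial.X ^ 3 - Polynomial.C δ) = 0 := by
    simp [hd]
  have hmin : minpoly F d = Polynomial.X ^ 3 - Polynomial.C δ :=
    (minpoly.eq_of_irreducible_of_monic hirr hroot
      (Polynomial.monic_X_pow_sub_C δ (by norm_num))).symm
  have hdeg : (minpoly F d).natDegree = 3 := by
    rw [hmin]; compute_degree!
  have h := linearIndependent_pow (K := F) d
  rw [hdeg] at h
  have he : ![(1:E), d, d^2] = fun i : Fin 3 => d ^ (i : ℕ) := by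
    funext i; fin_cases i <;> simp
  rw [he]; exact h

lemma fd_inj {d : E} (hLI : LinearIndependent F ![(1:E), d, d^2])
    {x0 x1 x2 y0 y1 y2 : F}
    (h : algebraMap F E x0 + algebraMap F E x1 * d + algebraMap F E x2 * d^2
       = algebraMap F E y0 + algebraMap F E y1 * d + algebraMap F E y2 * d^2) :
    x0 = y0 ∧ x1 = y1 ∧ x2 = y2 := by
  have key := Fintype.linearIndependent_iff.mp hLI ![x0-y0, x1-y1, x2-y2] ?_
  · exact ⟨sub_eq_zero.mp (key 0), sub_eq_zero.mp (key 1), sub_eq_zero.mp (key 2)⟩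
  · simp only [Fin.sum_univ_three, Matrix.cons_val_zero, Matrix.cons_val_one,
      Matrix.head_cons, Matrix.cons_val_two, Matrix.tail_cons, Algebra.smul_def,
      map_sub]
    linear_combination h

lemma fd_repr {d : E} (h3 : Module.finrank F E = 3)
    (hLI : LinearIndependent F ![(1:E), d, d^2]) (x : E) :
    ∃ c0 c1 c2 : F,
      x = algebraMap F E c0 + algebraMap F E c1 * d + algebraMap F E c2 * d^2 := by
  have hcard : Fintype.card (Fin 3) = Module.finrank F E := by simp [h3]
  let B := basisOfLinearIndependentOfCardEqFinrank hLI hcard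
  have hB : ∀ i, B i = ![(1:E), d, d^2] i := fun i =>
    congrFun (coe_basisOfLinearIndependentOfCardEqFinrank hLI hcard) i
  refine ⟨B.repr x 0, B.repr x 1, B.repr x 2, ?_⟩
  have hs := B.sum_repr x
  rw [Fin.sum_univ_three, hB 0, hB 1, hB 2] at hs
  simp only [Matrix.cons_val_zero, Matrix.cons_val_one, Matrix.head_cons,
    Matrix.cons_val_two, Matrix.tail_cons, Algebra.smul_def] at hs
  linear_combination -hs

lemma fd_det_ne {d α β : E} {a0 a1 a2 b0 b1 b2 : F}
    (hz : LinearIndependent F ![(1:E), α, β])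
    (hα : α = algebraMap F E a0 + algebraMap F E a1 * d + algebraMap F E a2 * d ^ 2)
    (hβ : β = algebraMap F E b0 + algebraMap F E b1 * d + algebraMap F E b2 * d ^ 2) :
    a1 * b2 - a2 * b1 ≠ 0 := by
  intro hD0
  have hE : algebraMap F E a1 * algebraMap F E b2
      = algebraMap F E a2 * algebraMap F E b1 := by
    rw [← map_mul, ← map_mul, sub_eq_zero.mp hD0]
  have key := Fintype.linearIndependent_iff.mp hz
  by_cases ha1 : a1 = 0
  · by_cases ha2 : a2 = 0
    · have h1 := key ![a0, -1, 0] ?_ 1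
      · norm_num at h1
      · simp only [Fin.sum_univ_three, Matrix.cons_val_zero, Matrix.cons_val_one,
          Matrix.head_cons, Matrix.cons_val_two, Matrix.tail_cons, Algebra.smul_def,
          map_neg, map_one, map_zero, hα, ha1, ha2]
        ring
    · have h1 := key ![a2*b0 - b2*a0, b2, -a2] ?_ 2
      · rw [show ![a2*b0 - b2*a0, b2, -a2] 2 = -a2 from rfl, neg_eq_zero] at h1
        exact ha2 h1
      · simp only [Fin.sum_univ_three, Matrix.cons_val_zero, Matrix.cons_val_one,
          Matrix.head_cons, Matrix.cons_val_two, Matrix.tail_cons, Algebra.smul_def,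
          map_neg, map_sub, map_mul, hα, hβ]
        linear_combination d * hE
  · have h1 := key ![a1*b0 - b1*a0, b1, -a1] ?_ 2
    · rw [show ![a1*b0 - b1*a0, b1, -a1] 2 = -a1 from rfl, neg_eq_zero] at h1
      exact ha1 h1
    · simp only [Fin.sum_univ_three, Matrix.cons_val_zero, Matrix.cons_val_one,
        Matrix.head_cons, Matrix.cons_val_two, Matrix.tail_cons, Algebra.smul_def,
        map_neg, map_sub, map_mul, hα, hβ]
      linear_combination (-(d^2)) * hE

lemma fd_mact (m : GL (Fin 3) F)
    (hm : m.val 1 0 = 0 ∧ m.val 2 0 = 0 ∧ m.val 2 1 = 0 ∧ m.val 2 2 = m.val 0 0)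
    (w z : E × E) (h : mact F E m.val w = z) :
    m.val 0 0 ≠ 0 ∧ m.val 1 1 ≠ 0 ∧
    algebraMap F E (m.val 0 0) * z.1
      = algebraMap F E (m.val 0 0) * w.1 + algebraMap F E (m.val 0 1) * w.2
        + algebraMap F E (m.val 0 2) ∧
    algebraMap F E (m.val 0 0) * z.2
      = algebraMap F E (m.val 1 1) * w.2 + algebraMap F E (m.val 1 2) := by
  obtain ⟨h10, h20, h21, h22⟩ := hm
  have hdet : m.val.det ≠ 0 := ((Matrix.isUnit_iff_isUnit_det m.val).mp m.isUnit).ne_zero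
  rw [Matrix.det_fin_three, h10, h20, h21, h22] at hdet
  have h00 : m.val 0 0 ≠ 0 := fun h0 => hdet (by rw [h0]; ring)
  have h11 : m.val 1 1 ≠ 0 := fun h0 => hdet (by rw [h0]; ring)
  have hden : mden F E m.val w = algebraMap F E (m.val 0 0) := by
    simp [mden, h20, h21, h22]
  have hne : algebraMap F E (m.val 0 0) ≠ 0 := fd_algne _ h00
  rw [mact, hden, Prod.ext_iff] at h
  obtain ⟨ha, hb⟩ := h
  rw [div_eq_iff hne] at ha hb
  refine ⟨h00, h11, ?_, ?_⟩
  · rw [mul_comm]; rw [← ha]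
  · rw [mul_comm, ← hb, h10, map_zero]; ring

end FDaux

theorem fundamental_domain_first_parabolic (F : Type*) [Field F] [Fintype F]
    (E : Type*) [Field E] [Algebra F E] (h3 : Module.finrank F E = 3)
    (δ : F) (hδ : ¬∃ x : F, x ^ 3 = δ) (d : E) (hd : d ^ 3 = algebraMap F E δ) :
    (∀ a : F, a ≠ 0 → ∀ m : GL (Fin 3) F,
        m.val * !![a, 0, a; 0, a, 0; 0, 0, a] = !![a, 0, a; 0, a, 0; 0, 0, a] * m.val ↔
        (m.val 1 0 = 0 ∧ m.val 2 0 = 0 ∧ m.val 2 1 = 0 ∧ m.val 2 2 = m.val 0 0)) ∧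
    ∀ z ∈ UHS F E, ∃! w : E × E,
      (w ∈ {z' : E × E | ∃ u v : F, u ≠ 0 ∧
              z' = (algebraMap F E u * d, algebraMap F E v * d + d ^ 2)} ∪
            {z' : E × E | ∃ u : F, u ≠ 0 ∧
              z' = (d + algebraMap F E u * d ^ 2, d)}) ∧
      ∃ m : GL (Fin 3) F,
        (m.val 1 0 = 0 ∧ m.val 2 0 = 0 ∧ m.val 2 1 = 0 ∧ m.val 2 2 = m.val 0 0) ∧
        mact F E m.val w = z := by
  constructor
  · -- centralizer computation
    intro a ha m
    constructor
    · intro h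
      have h00 := congrFun (congrFun h 0) 0
      have h01 := congrFun (congrFun h 0) 1
      have h02 := congrFun (congrFun h 0) 2
      have h12 := congrFun (congrFun h 1) 2
      simp [Matrix.mul_apply, Fin.sum_univ_three, Matrix.vecHead, Matrix.vecTail]
        at h00 h01 h02 h12
      refine ⟨?_, ?_, ?_, ?_⟩
      · have : a * m.val 1 0 = 0 := by linear_combination h12
        exact (mul_eq_zero.mp this).resolve_left ha
      · have : a * m.val 2 0 = 0 := by linear_combination -h00
        exact (mul_eq_zero.mp this).resolve_left ha
      · have : a * m.val 2 1 = 0 := by linear_combination -h01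
        exact (mul_eq_zero.mp this).resolve_left ha
      · have : a * m.val 2 2 = a * m.val 0 0 := by linear_combination -h02
        exact mul_left_cancel₀ ha this
    · rintro ⟨h1, h2, h3, h4⟩
      ext i j
      fin_cases i <;> fin_cases j <;>
        simp [Matrix.mul_apply, Fin.sum_univ_three, Matrix.vecHead, Matrix.vecTail,
          h1, h2, h3, h4] <;> ring
  · -- fundamental domain
    intro z hz
    have hLI : LinearIndependent F ![(1:E), d, d^2] := fd_LI δ hδ d hd
    obtain ⟨a0, a1, a2, hα⟩ := fd_repr h3 hLI z.1
    obtain ⟨b0, b1, b2, hβ⟩ := fd_repr h3 hLI z.2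
    have hD : a1 * b2 - a2 * b1 ≠ 0 := fd_det_ne hz hα hβ
    rcases eq_or_ne b2 0 with hb2 | hb2
    · -- b2 = 0 case : representative (d + a2 d², d)
      have hD' := hD
      rw [hb2, mul_zero, zero_sub, neg_ne_zero] at hD'
      have ha2 : a2 ≠ 0 := left_ne_zero_of_mul hD'
      have hb1 : b1 ≠ 0 := right_ne_zero_of_mul hD'
      refine ⟨(d + algebraMap F E a2 * d ^ 2, d),
        ⟨Or.inr ⟨a2, ha2, rfl⟩, ?_⟩, ?_⟩
      · -- existence of m
        refine ⟨Matrix.GeneralLinearGroup.mkOfDetNeZero !![1, a1 - 1, a0; 0, b1, b0; 0, 0, 1]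
          (by simp [Matrix.det_fin_three, Matrix.vecHead, Matrix.vecTail]; exact hb1),
          ⟨rfl, rfl, rfl, rfl⟩, ?_⟩
        have hden : mden F E (!![1, a1 - 1, a0; 0, b1, b0; 0, 0, 1])
            (d + algebraMap F E a2 * d ^ 2, d) = 1 := by
          simp [mden, Matrix.vecHead, Matrix.vecTail]
        show mact F E (!![1, a1 - 1, a0; 0, b1, b0; 0, 0, 1]) _ = z
        rw [mact, hden]
        refine Prod.ext_iff.mpr ⟨?_, ?_⟩
        · show (algebraMap F E (1:F) * (d + algebraMap F E a2 * d ^ 2)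
            + algebraMap F E (a1 - 1) * d + algebraMap F E a0) / 1 = z.1
          rw [hα, map_sub, map_one, div_one]; ring
        · show (algebraMap F E (0:F) * (d + algebraMap F E a2 * d ^ 2)
            + algebraMap F E b1 * d + algebraMap F E b0) / 1 = z.2
          rw [hβ, hb2, map_zero, div_one]; ring
      · -- uniqueness
        rintro w' ⟨hmem, m', hm', hact⟩
        obtain ⟨ht0, hc0, e1, e2⟩ := fd_mact m' hm' w' z hact
        rcases hmem with ⟨u', v', hu', hw'⟩ | ⟨u', hu', hw'⟩
        · exfalso
          rw [hw'] at e2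
          rw [hβ] at e2
          obtain ⟨f0, f1, f2⟩ := fd_inj hLI
            (x0 := m'.val 0 0 * b0) (x1 := m'.val 0 0 * b1) (x2 := m'.val 0 0 * b2)
            (y0 := m'.val 1 2) (y1 := m'.val 1 1 * v') (y2 := m'.val 1 1)
            (by simp only [map_mul]; linear_combination e2)
          rw [hb2, mul_zero] at f2
          exact hc0 f2.symm
        · rw [hw'] at e1
          rw [hα] at e1
          obtain ⟨g0, g1, g2⟩ := fd_inj hLI
            (x0 := m'.val 0 0 * a0) (x1 := m'.val 0 0 * a1) (x2 := m'.val 0 0 * a2)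
            (y0 := m'.val 0 2) (y1 := m'.val 0 0 + m'.val 0 1) (y2 := m'.val 0 0 * u')
            (by simp only [map_mul, map_add]; linear_combination e1)
          have hue : u' = a2 := (mul_left_cancel₀ ht0 g2).symm
          rw [hw', hue]
    · -- b2 ≠ 0 case : representative (u d, v d + d²)
      have hu : (a1 * b2 - a2 * b1) / b2 ≠ 0 := div_ne_zero hD hb2
      have hb2E : algebraMap F E b2 ≠ 0 := fd_algne _ hb2
      refine ⟨(algebraMap F E ((a1 * b2 - a2 * b1) / b2) * d,
        algebraMap F E (b1 / b2) * d + d ^ 2),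
        ⟨Or.inl ⟨_, _, hu, rfl⟩, ?_⟩, ?_⟩
      · refine ⟨Matrix.GeneralLinearGroup.mkOfDetNeZero !![1, a2, a0; 0, b2, b0; 0, 0, 1]
          (by simp [Matrix.det_fin_three, Matrix.vecHead, Matrix.vecTail]; exact hb2),
          ⟨rfl, rfl, rfl, rfl⟩, ?_⟩
        have hden : mden F E (!![1, a2, a0; 0, b2, b0; 0, 0, 1])
            (algebraMap F E ((a1 * b2 - a2 * b1) / b2) * d,
             algebraMap F E (b1 / b2) * d + d ^ 2) = 1 := by
          simp [mden, Matrix.vecHead, Matrix.vecTail]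
        show mact F E (!![1, a2, a0; 0, b2, b0; 0, 0, 1]) _ = z
        rw [mact, hden]
        refine Prod.ext_iff.mpr ⟨?_, ?_⟩
        · show (algebraMap F E (1:F) * (algebraMap F E ((a1 * b2 - a2 * b1) / b2) * d)
            + algebraMap F E a2 * (algebraMap F E (b1 / b2) * d + d ^ 2)
            + algebraMap F E a0) / 1 = z.1
          rw [hα, map_div₀, map_div₀, map_sub, map_mul, map_mul, map_one, div_one]
          field_simp
          ring
        · show (algebraMap F E (0:F) * (algebraMap F E ((a1 * b2 - a2 * b1) / b2) * d)
            + algebraMap F E b2 * (algebraMap F E (b1 / b2) * d + d ^ 2)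
            + algebraMap F E b0) / 1 = z.2
          rw [hβ, map_div₀, map_div₀, map_zero, div_one]
          field_simp
          ring
      · rintro w' ⟨hmem, m', hm', hact⟩
        obtain ⟨ht0, hc0, e1, e2⟩ := fd_mact m' hm' w' z hact
        rcases hmem with ⟨u', v', hu', hw'⟩ | ⟨u', hu', hw'⟩
        · rw [hw'] at e1 e2
          rw [hβ] at e2
          obtain ⟨f0, f1, f2⟩ := fd_inj hLI
            (x0 := m'.val 0 0 * b0) (x1 := m'.val 0 0 * b1) (x2 := m'.val 0 0 * b2)
            (y0 := m'.val 1 2) (y1 := m'.val 1 1 * v') (y2 := m'.val 1 1)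
            (by simp only [map_mul]; linear_combination e2)
          rw [hα] at e1
          obtain ⟨g0, g1, g2⟩ := fd_inj hLI
            (x0 := m'.val 0 0 * a0) (x1 := m'.val 0 0 * a1) (x2 := m'.val 0 0 * a2)
            (y0 := m'.val 0 2) (y1 := m'.val 0 0 * u' + m'.val 0 1 * v')
            (y2 := m'.val 0 1)
            (by simp only [map_mul, map_add]; linear_combination e1)
          have hv : b2 * v' = b1 := by
            apply mul_left_cancel₀ ht0
            linear_combination v' * f2 - f1
          have hvv : v' = b1 / b2 := by
            rw [eq_div_iff hb2]; linear_combination hv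
          have hua : u' = a1 - a2 * v' := by
            apply mul_left_cancel₀ ht0
            linear_combination v' * g2 - g1
          have huu : u' = (a1 * b2 - a2 * b1) / b2 := by
            rw [eq_div_iff hb2]; linear_combination b2 * hua - a2 * hv
          rw [hw', huu, hvv]
        · exfalso
          rw [hw'] at e2
          rw [hβ] at e2
          obtain ⟨f0, f1, f2⟩ := fd_inj hLI
            (x0 := m'.val 0 0 * b0) (x1 := m'.val 0 0 * b1) (x2 := m'.val 0 0 * b2)
            (y0 := m'.val 1 2) (y1 := m'.val 1 1) (y2 := 0)
            (by simp only [map_mul, map_zero]; linear_combination e2)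
          exact hb2 ((mul_eq_zero.mp f2).resolve_left ht0)
end

section
/- Let B be the Borel subgroup of GL₃(F) consisting of invertible upper-triangular matrices. Then the set {(d, v·d + d²) : v ∈ F} ∪ {(d², d)} is a fundamental domain for the action of B on H_q: every (α, β) ∈ H_q lies in the B-orbit of exactly one element of this set. -/
open IntermediateField in
theorem fundamental_domain_borel (F : Type*) [Field F] [Fintype F]
    (E : Type*) [Field E] [Algebra F E] (h3 : Module.finrank F E = 3)
    (δ : F) (hδ : ¬∃ x : F, x ^ 3 = δ) (d : E) (hd : d ^ 3 = algebraMap F E δ) :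
    ∀ z ∈ UHS F E, ∃! w : E × E,
      (w ∈ {z' : E × E | ∃ v : F, z' = (d, algebraMap F E v * d + d ^ 2)} ∪
            {(d ^ 2, d)}) ∧
      ∃ m : GL (Fin 3) F,
        (m.val 1 0 = 0 ∧ m.val 2 0 = 0 ∧ m.val 2 1 = 0) ∧
        mact F E m.val w = z := by
  have hAinj : Function.Injective (algebraMap F E) := (algebraMap F E).injective
  haveI : FiniteDimensional F E := Module.finite_of_finrank_eq_succ h3
  have hint : IsIntegral F d := IsIntegral.of_finite F d
  have hdeg : (minpoly F d).natDegree = 3 := by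
    have h1 := Module.finrank_mul_finrank F F⟮d⟯ E
    rw [h3] at h1
    have hdvd : Module.finrank F F⟮d⟯ ∣ 3 := Dvd.intro _ h1
    rcases (Nat.prime_three.eq_one_or_self_of_dvd _ hdvd) with h | h
    · exfalso
      rw [IntermediateField.finrank_eq_one_iff] at h
      have hmem : d ∈ (⊥ : IntermediateField F E) :=
        h ▸ IntermediateField.mem_adjoin_simple_self F d
      rw [IntermediateField.mem_bot] at hmem
      obtain ⟨x, hx⟩ := hmem
      exact hδ ⟨x, hAinj (by rw [map_pow, hx, hd])⟩
    · rw [← IntermediateField.adjoin.finrank hint, h]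
  have hpow : LinearIndependent F fun i : Fin ((minpoly F d).natDegree) => d ^ (i : ℕ) :=
    linearIndependent_pow d
  rw [hdeg] at hpow
  have hindep : LinearIndependent F ![(1:E), d, d^2] := by
    convert hpow using 1
    funext i
    fin_cases i <;> simp
  have hcard : Fintype.card (Fin 3) = Module.finrank F E := by rw [h3]; simp
  let bE : Module.Basis (Fin 3) F E := basisOfLinearIndependentOfCardEqFinrank hindep hcard
  have hbE : ∀ x : E, x = algebraMap F E (bE.repr x 0) + algebraMap F E (bE.repr x 1) * d
      + algebraMap F E (bE.repr x 2) * d^2 := by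
    intro x
    conv_lhs => rw [← bE.sum_repr x]
    rw [Fin.sum_univ_three]
    simp only [bE, coe_basisOfLinearIndependentOfCardEqFinrank, Algebra.smul_def,
      Matrix.cons_val_zero, Matrix.cons_val_one, Matrix.head_cons, Matrix.cons_val_two,
      Matrix.tail_cons, mul_one]
  have key : ∀ c0 c1 c2 : F, algebraMap F E c0 + algebraMap F E c1 * d
      + algebraMap F E c2 * d^2 = 0 → c0 = 0 ∧ c1 = 0 ∧ c2 = 0 := by
    intro c0 c1 c2 h
    have h' := Fintype.linearIndependent_iff.mp hindep ![c0, c1, c2] ?_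
    · exact ⟨h' 0, h' 1, h' 2⟩
    · rw [Fin.sum_univ_three]
      simpa [Algebra.smul_def] using h
  have key2 : ∀ c0 c1 c2 c0' c1' c2' : F,
      algebraMap F E c0 + algebraMap F E c1 * d + algebraMap F E c2 * d^2 =
      algebraMap F E c0' + algebraMap F E c1' * d + algebraMap F E c2' * d^2 →
      c0 = c0' ∧ c1 = c1' ∧ c2 = c2' := by
    intro c0 c1 c2 c0' c1' c2' h
    obtain ⟨h0, h1, h2⟩ := key (c0 - c0') (c1 - c1') (c2 - c2')
      (by simp only [map_sub]; linear_combination h)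
    exact ⟨sub_eq_zero.mp h0, sub_eq_zero.mp h1, sub_eq_zero.mp h2⟩
  have mkGL : ∀ M : Matrix (Fin 3) (Fin 3) F, M.det ≠ 0 → ∃ m : GL (Fin 3) F, m.val = M := by
    intro M hM
    exact ⟨⟨M, M⁻¹, Matrix.mul_nonsing_inv M (isUnit_iff_ne_zero.mpr hM),
      Matrix.nonsing_inv_mul M (isUnit_iff_ne_zero.mpr hM)⟩, rfl⟩
  rintro ⟨α, β⟩ hz
  simp only [UHS, Set.mem_setOf_eq] at hz
  have dep : ∀ g : Fin 3 → F,
      algebraMap F E (g 0) + algebraMap F E (g 1) * α + algebraMap F E (g 2) * β = 0 →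
      ∀ i, g i = 0 := by
    intro g hs
    apply Fintype.linearIndependent_iff.mp hz
    rw [Fin.sum_univ_three]
    simpa [Algebra.smul_def] using hs
  obtain ⟨a0, a1, a2, hα⟩ : ∃ c0 c1 c2, α = algebraMap F E c0 + algebraMap F E c1 * d
      + algebraMap F E c2 * d^2 := ⟨_, _, _, hbE α⟩
  obtain ⟨b0, b1, b2, hβ⟩ : ∃ c0 c1 c2, β = algebraMap F E c0 + algebraMap F E c1 * d
      + algebraMap F E c2 * d^2 := ⟨_, _, _, hbE β⟩
  have hdet : a1 * b2 - a2 * b1 ≠ 0 := by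
    intro hcon
    have hconE : algebraMap F E a1 * algebraMap F E b2
        - algebraMap F E a2 * algebraMap F E b1 = 0 := by
      rw [← map_mul, ← map_mul, ← map_sub, hcon, map_zero]
    by_cases hb2 : b2 = 0
    · by_cases hb1 : b1 = 0
      · have := dep ![b0, 0, -1] ?_ 2
        · simp at this
        · rw [hβ, hb1, hb2]
          simp
      · have ha2 : a2 = 0 := by
          have : a2 * b1 = 0 := by linear_combination a1 * hb2 - hcon
          exact (mul_eq_zero.mp this).resolve_right hb1
        have := dep ![-(b1 * a0 - a1 * b0), b1, -a1] ?_ 1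
        · exact hb1 (by simpa using this)
        · rw [hα, hβ, ha2, hb2]
          simp only [Matrix.cons_val_zero, Matrix.cons_val_one, Matrix.head_cons,
            Matrix.cons_val_two, Matrix.tail_cons, map_neg, map_sub, map_mul, map_zero]
          ring
    · have := dep ![-(b2 * a0 - a2 * b0), b2, -a2] ?_ 1
      · exact hb2 (by simpa using this)
      · rw [hα, hβ]
        simp only [Matrix.cons_val_zero, Matrix.cons_val_one, Matrix.head_cons,
          Matrix.cons_val_two, Matrix.tail_cons, map_neg, map_sub, map_mul]
        linear_combination hconE * d
  have triag : ∀ (m : GL (Fin 3) F), m.val 1 0 = 0 → m.val 2 0 = 0 → m.val 2 1 = 0 →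
      m.val 0 0 ≠ 0 ∧ m.val 1 1 ≠ 0 ∧ m.val 2 2 ≠ 0 := by
    intro m h10 h20 h21
    have hdm : m.val.det ≠ 0 :=
      IsUnit.ne_zero ((Matrix.isUnit_iff_isUnit_det m.val).mp m.isUnit)
    rw [Matrix.det_fin_three, h10, h20, h21] at hdm
    ring_nf at hdm
    refine ⟨fun h => hdm ?_, fun h => hdm ?_, fun h => hdm ?_⟩ <;> rw [h] <;> ring
  -- second-coordinate analysis for uniqueness
  have snd_eq : ∀ (w' : E × E) (m : GL (Fin 3) F), m.val 1 0 = 0 → m.val 2 0 = 0 →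
      m.val 2 1 = 0 → mact F E m.val w' = (α, β) →
      algebraMap F E (m.val 1 1) * w'.2 + algebraMap F E (m.val 1 2)
        = β * algebraMap F E (m.val 2 2) := by
    intro w' m h10 h20 h21 hact
    obtain ⟨-, -, hn22⟩ := triag m h10 h20 h21
    have hA22 : algebraMap F E (m.val 2 2) ≠ 0 :=
      fun h => hn22 (hAinj (by rw [h, map_zero]))
    have hsnd := congrArg Prod.snd hact
    simp only [mact, mden] at hsnd
    simp only [h10, h20, h21, map_zero, zero_mul, zero_add] at hsnd
    rw [div_eq_iff hA22] at hsnd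
    exact hsnd
  by_cases hb2 : b2 = 0
  · -- representative (d^2, d)
    have ha2 : a2 ≠ 0 := fun h => hdet (by rw [hb2, h]; ring)
    have hb1 : b1 ≠ 0 := fun h => hdet (by rw [hb2, h]; ring)
    refine ⟨(d^2, d), ⟨Set.mem_union_right _ rfl, ?_⟩, ?_⟩
    · obtain ⟨m, hm⟩ := mkGL !![a2, a1, a0; 0, b1, b0; 0, 0, 1] (by
        rw [show (!![a2, a1, a0; 0, b1, b0; 0, 0, 1]).det = a2 * b1 by
          rw [Matrix.det_fin_three]; simp [Matrix.vecHead, Matrix.vecTail]]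
        exact mul_ne_zero ha2 hb1)
      refine ⟨m, by rw [hm]; refine ⟨by simp [Matrix.vecHead, Matrix.vecTail], by simp [Matrix.vecHead, Matrix.vecTail], by simp [Matrix.vecHead, Matrix.vecTail]⟩, ?_⟩
      rw [hm]
      have hden : mden F E !![a2, a1, a0; 0, b1, b0; 0, 0, 1] ((d^2 : E), d) = 1 := by
        norm_num [mden, Matrix.cons_val_zero, Matrix.cons_val_one, Matrix.head_cons,
          Matrix.cons_val_two, Matrix.tail_cons, Matrix.vecHead, Matrix.vecTail]
      simp only [mact]
      rw [hden]
      norm_num [Matrix.cons_val_zero, Matrix.cons_val_one, Matrix.head_cons,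
        Matrix.cons_val_two, Matrix.tail_cons, Matrix.vecHead, Matrix.vecTail, Prod.mk.injEq]
      constructor
      · rw [hα]; ring
      · rw [hβ, hb2, map_zero]; ring
    · rintro w' ⟨hw'mem, m, ⟨h10, h20, h21⟩, hact⟩
      obtain ⟨-, hn11, -⟩ := triag m h10 h20 h21
      have hsnd := snd_eq w' m h10 h20 h21 hact
      rcases hw'mem with ⟨v', hv'⟩ | hw'
      · exfalso
        rw [hv'] at hsnd
        have hk := key2 (m.val 1 2) (m.val 1 1 * v') (m.val 1 1)
            (b0 * m.val 2 2) (b1 * m.val 2 2) (b2 * m.val 2 2) (by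
          rw [hβ] at hsnd
          simp only [map_mul]
          linear_combination hsnd)
        exact hn11 (by rw [hk.2.2, hb2, zero_mul])
      · exact hw'
  · -- representative (d, (b1/b2) d + d^2)
    obtain ⟨v, hv⟩ : ∃ v : F, v = b1 / b2 := ⟨_, rfl⟩
    refine ⟨(d, algebraMap F E v * d + d^2), ⟨Set.mem_union_left _ ⟨v, rfl⟩, ?_⟩, ?_⟩
    · have h00 : a1 - a2 * v ≠ 0 := by
        intro h
        apply hdet
        have h' : (a1 - a2 * v) * b2 = 0 := by rw [h]; ring
        rw [hv] at h'
        field_simp at h'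
        linear_combination h' 
      obtain ⟨m, hm⟩ := mkGL !![a1 - a2 * v, a2, a0; 0, b2, b0; 0, 0, 1] (by
        rw [show (!![a1 - a2 * v, a2, a0; 0, b2, b0; 0, 0, 1]).det
            = (a1 - a2 * v) * b2 by rw [Matrix.det_fin_three]; simp [Matrix.vecHead, Matrix.vecTail]]
        exact mul_ne_zero h00 hb2)
      refine ⟨m, by rw [hm]; refine ⟨by simp [Matrix.vecHead, Matrix.vecTail], by simp [Matrix.vecHead, Matrix.vecTail], by simp [Matrix.vecHead, Matrix.vecTail]⟩, ?_⟩
      rw [hm]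
      have hden : mden F E !![a1 - a2 * v, a2, a0; 0, b2, b0; 0, 0, 1]
          (d, algebraMap F E v * d + d^2) = 1 := by
        norm_num [mden, Matrix.cons_val_zero, Matrix.cons_val_one, Matrix.head_cons,
          Matrix.cons_val_two, Matrix.tail_cons, Matrix.vecHead, Matrix.vecTail]
      have hbv : algebraMap F E b2 * algebraMap F E v = algebraMap F E b1 := by
        rw [← map_mul]; congr 1; rw [hv]; field_simp
      simp only [mact]
      rw [hden]
      norm_num [Matrix.cons_val_zero, Matrix.cons_val_one, Matrix.head_cons,
        Matrix.cons_val_two, Matrix.tail_cons, Matrix.vecHead, Matrix.vecTail, Prod.mk.injEq]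
      constructor
      · rw [hα]; ring
      · rw [hβ]; linear_combination (d : E) * hbv
    · rintro w' ⟨hw'mem, m, ⟨h10, h20, h21⟩, hact⟩
      obtain ⟨-, hn11, hn22⟩ := triag m h10 h20 h21
      have hsnd := snd_eq w' m h10 h20 h21 hact
      rcases hw'mem with ⟨v', hv'⟩ | hw'
      · rw [hv'] at hsnd
        have hk := key2 (m.val 1 2) (m.val 1 1 * v') (m.val 1 1)
            (b0 * m.val 2 2) (b1 * m.val 2 2) (b2 * m.val 2 2) (by
          rw [hβ] at hsnd
          simp only [map_mul]
          linear_combination hsnd)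
        have hv'v : v' = v := by
          have h1 : m.val 1 1 * v' = b1 * m.val 2 2 := hk.2.1
          have h2 : m.val 1 1 = b2 * m.val 2 2 := hk.2.2
          rw [h2] at h1
          have h3 : b2 * v' = b1 := mul_right_cancel₀ hn22 (by linear_combination h1 :
            b2 * v' * m.val 2 2 = b1 * m.val 2 2)
          rw [hv]
          field_simp
          linear_combination h3
        rw [hv', hv'v]
      · exfalso
        rw [hw'] at hsnd
        have hk := key2 (m.val 1 2) (m.val 1 1) 0
            (b0 * m.val 2 2) (b1 * m.val 2 2) (b2 * m.val 2 2) (by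
          rw [hβ] at hsnd
          simp only [map_mul, map_zero]
          linear_combination hsnd)
        exact hb2 (by
          have : b2 * m.val 2 2 = 0 := hk.2.2.symm
          exact (mul_eq_zero.mp this).resolve_right hn22)
end

section
/- Let ξ ∈ F× be a nonsquare in F, and let G_γ be the subgroup of GL₃(F) consisting of matrices of the form [[a, bξ, 0], [b, a, 0], [0, 0, c]] with a, b, c ∈ F and c(a² − b²ξ) ≠ 0. Then the set {(x + u·d + v·d², y + d) : x, y, u ∈ F, v ∈ F×} is a fundamental domain for the action of G_γ on H_q: every (α, β) ∈ H_q lies in the G_γ-orbit of exactly one element of this set. -/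
open Polynomial in
lemma my_li {F : Type*} [Field F] {E : Type*} [Field E] [Algebra F E]
    (δ : F) (hδ : ¬∃ x : F, x ^ 3 = δ) (d : E) (hd : d ^ 3 = algebraMap F E δ) :
    LinearIndependent F ![1, d, d ^ 2] := by
  have hirr : Irreducible (X ^ 3 - C δ) :=
    X_pow_sub_C_irreducible_of_prime (by norm_num) (fun b hb => hδ ⟨b, hb⟩)
  have hmp : minpoly F d = X ^ 3 - C δ := by
    refine (minpoly.eq_of_irreducible_of_monic hirr ?_ (monic_X_pow_sub_C δ (by norm_num))).symm
    simp [hd, sub_eq_zero]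
  have h := linearIndependent_pow (K := F) (S := E) d
  rw [hmp] at h
  have hdeg : (X ^ 3 - C δ).natDegree = 3 := by
    simp [natDegree_X_pow_sub_C]
  rw [hdeg] at h
  convert h using 1
  funext i
  fin_cases i <;> simp

lemma coeff_eq {F : Type*} [Field F] {E : Type*} [Field E] [Algebra F E] {d : E}
    (hli : LinearIndependent F ![1, d, d ^ 2]) {p q r p' q' r' : F}
    (h : algebraMap F E p + algebraMap F E q * d + algebraMap F E r * d ^ 2 =
      algebraMap F E p' + algebraMap F E q' * d + algebraMap F E r' * d ^ 2) :
    p = p' ∧ q = q' ∧ r = r' := by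
  rw [Fintype.linearIndependent_iff] at hli
  have h0 := hli ![p - p', q - q', r - r'] ?_
  · exact ⟨sub_eq_zero.mp (h0 0), sub_eq_zero.mp (h0 1), sub_eq_zero.mp (h0 2)⟩
  · simp only [Fin.sum_univ_three, Matrix.cons_val_zero, Matrix.cons_val_one, Matrix.head_cons,
      Matrix.cons_val_two, Matrix.tail_cons, Algebra.smul_def, map_sub]
    ring_nf
    linear_combination h

theorem fundamental_domain_second_elliptic (F : Type*) [Field F] [Fintype F]
    (E : Type*) [Field E] [Algebra F E] (h3 : Module.finrank F E = 3)
    (δ : F) (hδ : ¬∃ x : F, x ^ 3 = δ) (d : E) (hd : d ^ 3 = algebraMap F E δ)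
    (ξ : F) (hξ : ¬∃ x : F, x ^ 2 = ξ) :
    ∀ z ∈ UHS F E, ∃! w : E × E,
      (∃ x y u v : F, v ≠ 0 ∧
          w = (algebraMap F E x + algebraMap F E u * d + algebraMap F E v * d ^ 2,
               algebraMap F E y + d)) ∧
      ∃ m : GL (Fin 3) F,
        (m.val 1 1 = m.val 0 0 ∧ m.val 0 1 = ξ * m.val 1 0 ∧
          m.val 0 2 = 0 ∧ m.val 1 2 = 0 ∧ m.val 2 0 = 0 ∧ m.val 2 1 = 0) ∧
        mact F E m.val w = z := by
  intro z hz
  replace hz : LinearIndependent F ![1, z.1, z.2] := hz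
  have hli := my_li δ hδ d hd
  have hcard : Fintype.card (Fin 3) = Module.finrank F E := by simp [h3]
  let B := basisOfLinearIndependentOfCardEqFinrank hli hcard
  have hB : ⇑B = ![1, d, d ^ 2] := coe_basisOfLinearIndependentOfCardEqFinrank _ _
  have hrep : ∀ e : E, ∃ p q r : F,
      e = algebraMap F E p + algebraMap F E q * d + algebraMap F E r * d ^ 2 := by
    intro e
    refine ⟨B.repr e 0, B.repr e 1, B.repr e 2, ?_⟩
    have h := B.sum_repr e
    rw [Fin.sum_univ_three] at h
    simp only [hB] at h
    simpa [Algebra.smul_def] using h.symm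
  obtain ⟨A0, A1, A2, hα⟩ := hrep z.1
  obtain ⟨B0, B1, B2, hβ⟩ := hrep z.2
  have hzfin := Fintype.linearIndependent_iff.mp hz
  have hD : A2 ^ 2 - ξ * B2 ^ 2 ≠ 0 := by
    intro h
    have hB2 : B2 = 0 := by
      by_contra hB2
      exact hξ ⟨A2 / B2, by field_simp; linear_combination h⟩
    have hA2 : A2 = 0 := by
      have : A2 ^ 2 = 0 := by rw [hB2] at h; linear_combination h
      exact pow_eq_zero_iff (by norm_num) |>.mp this
    by_cases hA1 : A1 = 0
    · by_cases hB1 : B1 = 0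
      · have h0 := hzfin ![A0, -1, 0] ?_ 1
        · norm_num at h0
        · simp only [Fin.sum_univ_three, Matrix.cons_val_zero, Matrix.cons_val_one,
            Matrix.head_cons, Matrix.cons_val_two, Matrix.tail_cons, Algebra.smul_def]
          rw [hα, hA1, hA2]
          simp only [map_zero, map_neg, map_one]
          ring
      · have h0 := hzfin ![A1 * B0 - B1 * A0, B1, -A1] ?_ 1
        · exact hB1 (by simpa using h0)
        · simp only [Fin.sum_univ_three, Matrix.cons_val_zero, Matrix.cons_val_one,
            Matrix.head_cons, Matrix.cons_val_two, Matrix.tail_cons, Algebra.smul_def]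
          rw [hα, hβ, hA2, hB2]
          simp only [map_zero, map_neg, map_sub, map_mul, map_one]
          ring
    · have h0 := hzfin ![A1 * B0 - B1 * A0, B1, -A1] ?_ 2
      · exact hA1 (by simpa [neg_eq_zero] using h0)
      · simp only [Fin.sum_univ_three, Matrix.cons_val_zero, Matrix.cons_val_one,
          Matrix.head_cons, Matrix.cons_val_two, Matrix.tail_cons, Algebra.smul_def]
        rw [hα, hβ, hA2, hB2]
        simp only [map_zero, map_neg, map_sub, map_mul, map_one]
        ring
  have hΔ : A1 * B2 - A2 * B1 ≠ 0 := by
    intro h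
    have h2 : ¬(A2 = 0 ∧ B2 = 0) := by
      rintro ⟨p, q⟩
      exact hD (by rw [p, q]; ring)
    have hsum : ∑ i, (![A2 * B0 - B2 * A0, B2, -A2]) i • (![1, z.1, z.2]) i = 0 := by
      simp only [Fin.sum_univ_three, Matrix.cons_val_zero, Matrix.cons_val_one,
        Matrix.head_cons, Matrix.cons_val_two, Matrix.tail_cons, Algebra.smul_def]
      rw [hα, hβ]
      simp only [map_zero, map_neg, map_sub, map_mul, map_one]
      have hE' : algebraMap F E A1 * algebraMap F E B2 - algebraMap F E A2 * algebraMap F E B1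
          = 0 := by
        rw [← map_mul, ← map_mul, ← map_sub, h, map_zero]
      linear_combination d * hE'
    by_cases hA2 : A2 = 0
    · have hB2 : B2 ≠ 0 := fun q => h2 ⟨hA2, q⟩
      exact hB2 (by simpa using hzfin _ hsum 1)
    · exact hA2 (by simpa [neg_eq_zero] using hzfin _ hsum 2)
  obtain ⟨v₀, u₀, x₀, y₀, hv₀, f1, f2, f4, f5⟩ :
      ∃ v₀ u₀ x₀ y₀ : F, v₀ ≠ 0 ∧
        A2 * x₀ + ξ * B2 * y₀ = v₀ * A0 ∧
        A2 * u₀ + ξ * B2 = v₀ * A1 ∧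
        B2 * x₀ + A2 * y₀ = v₀ * B0 ∧
        B2 * u₀ + A2 = v₀ * B1 := by
    refine ⟨-(A2^2 - ξ*B2^2)/(A1*B2 - A2*B1), (ξ*B1*B2 - A1*A2)/(A1*B2 - A2*B1),
      (-(A2^2 - ξ*B2^2)/(A1*B2 - A2*B1)) * (A2*A0 - ξ*B2*B0)/(A2^2 - ξ*B2^2),
      (-(A2^2 - ξ*B2^2)/(A1*B2 - A2*B1)) * (A2*B0 - B2*A0)/(A2^2 - ξ*B2^2),
      div_ne_zero (neg_ne_zero.mpr hD) hΔ, ?_, ?_, ?_, ?_⟩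
    · have hJ : (A2^2 - ξ*B2^2) * (A2^2 - ξ*B2^2)⁻¹ = 1 := mul_inv_cancel₀ hD
      linear_combination (-(A2^2 - ξ*B2^2) * (A1*B2 - A2*B1)⁻¹ * A0) * hJ
    · have hI : (A1*B2 - A2*B1) * (A1*B2 - A2*B1)⁻¹ = 1 := mul_inv_cancel₀ hΔ
      linear_combination (-ξ*B2) * hI
    · have hJ : (A2^2 - ξ*B2^2) * (A2^2 - ξ*B2^2)⁻¹ = 1 := mul_inv_cancel₀ hD
      linear_combination (-(A2^2 - ξ*B2^2) * (A1*B2 - A2*B1)⁻¹ * B0) * hJ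
    · have hI : (A1*B2 - A2*B1) * (A1*B2 - A2*B1)⁻¹ = 1 := mul_inv_cancel₀ hΔ
      linear_combination (-A2) * hI
  have f1E : algebraMap F E A2 * algebraMap F E x₀ +
      algebraMap F E ξ * algebraMap F E B2 * algebraMap F E y₀ =
      algebraMap F E v₀ * algebraMap F E A0 := by
    simpa only [map_add, map_mul] using congrArg (algebraMap F E) f1
  have f2E : algebraMap F E A2 * algebraMap F E u₀ + algebraMap F E ξ * algebraMap F E B2 =
      algebraMap F E v₀ * algebraMap F E A1 := by
    simpa only [map_add, map_mul] using congrArg (algebraMap F E) f2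
  have f4E : algebraMap F E B2 * algebraMap F E x₀ + algebraMap F E A2 * algebraMap F E y₀ =
      algebraMap F E v₀ * algebraMap F E B0 := by
    simpa only [map_add, map_mul] using congrArg (algebraMap F E) f4
  have f5E : algebraMap F E B2 * algebraMap F E u₀ + algebraMap F E A2 =
      algebraMap F E v₀ * algebraMap F E B1 := by
    simpa only [map_add, map_mul] using congrArg (algebraMap F E) f5
  have hv₀E : algebraMap F E v₀ ≠ 0 := by
    simpa using (map_ne_zero (algebraMap F E)).mpr hv₀
  have hdet : (Matrix.of ![![A2, ξ*B2, 0], ![B2, A2, 0], ![0, 0, v₀]]).det ≠ 0 := by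
    rw [Matrix.det_fin_three]
    have h := mul_ne_zero hv₀ hD
    intro hc
    apply h
    simp only [Matrix.of_apply, Matrix.cons_val', Matrix.cons_val_zero, Matrix.cons_val_one,
      Matrix.head_cons, Matrix.empty_val', Matrix.cons_val_fin_one, Matrix.cons_val_two,
      Matrix.tail_cons, Matrix.head_fin_const] at hc
    linear_combination hc
  refine ⟨(algebraMap F E x₀ + algebraMap F E u₀ * d + algebraMap F E v₀ * d ^ 2,
      algebraMap F E y₀ + d), ⟨⟨x₀, y₀, u₀, v₀, hv₀, rfl⟩,
      Matrix.GeneralLinearGroup.mkOfDetNeZero _ hdet, ⟨rfl, rfl, rfl, rfl, rfl, rfl⟩, ?_⟩, ?_⟩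
  · -- existence: the action sends w₀ to z
    have hden : mden F E (Matrix.of ![![A2, ξ*B2, 0], ![B2, A2, 0], ![0, 0, v₀]])
        (algebraMap F E x₀ + algebraMap F E u₀ * d + algebraMap F E v₀ * d ^ 2,
         algebraMap F E y₀ + d) = algebraMap F E v₀ := by
      simp [mden]
    have hmv : ((Matrix.GeneralLinearGroup.mkOfDetNeZero _ hdet : GL (Fin 3) F) :
        Matrix (Fin 3) (Fin 3) F) = Matrix.of ![![A2, ξ*B2, 0], ![B2, A2, 0], ![0, 0, v₀]] := rfl
    refine Prod.ext ?_ ?_ <;>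
      · simp only [mact, hmv, hden, Matrix.of_apply, Matrix.cons_val', Matrix.cons_val_zero,
          Matrix.cons_val_one, Matrix.head_cons, Matrix.empty_val', Matrix.cons_val_fin_one,
          Matrix.cons_val_two, Matrix.tail_cons, Matrix.head_fin_const]
        rw [div_eq_iff hv₀E]
        first
        | · rw [hα]
            simp only [map_add, map_mul, map_zero]
            linear_combination f1E + d * f2E
        | · rw [hβ]
            simp only [map_add, map_mul, map_zero]
            linear_combination f4E + d * f5E
  · -- uniqueness
    rintro w' ⟨⟨x', y', u', v', hv', rfl⟩, m', ⟨hm11, hm01, hm02, hm12, hm20, hm21⟩, hmact⟩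
    set a := m'.val 0 0 with hadef
    set b := m'.val 1 0 with hbdef
    set c := m'.val 2 2 with hcdef
    have hdet' : (m'.val).det ≠ 0 :=
      ((Matrix.isUnit_iff_isUnit_det m'.val).mp m'.isUnit).ne_zero
    have hdv : m'.val.det = c * (a ^ 2 - ξ * b ^ 2) := by
      rw [Matrix.det_fin_three, hm11, hm01, hm02, hm12, hm20, hm21]
      ring
    have hc : c ≠ 0 := fun h => hdet' (by rw [hdv, h, zero_mul])
    have hcE : algebraMap F E c ≠ 0 := by
      simpa using (map_ne_zero (algebraMap F E)).mpr hc
    have h1 := congrArg Prod.fst hmact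
    have h2 := congrArg Prod.snd hmact
    have hden : mden F E m'.val
        (algebraMap F E x' + algebraMap F E u' * d + algebraMap F E v' * d ^ 2,
         algebraMap F E y' + d) = algebraMap F E c := by
      simp [mden, hm20, hm21, hcdef]
    simp only [mact, hden] at h1 h2
    rw [div_eq_iff hcE] at h1 h2
    rw [hm01, hm02, hα] at h1
    rw [hm11, hm12, hβ] at h2
    simp only [map_add, map_mul, map_zero] at h1 h2
    obtain ⟨E1, E2, E3⟩ := coeff_eq hli
      (p := a * x' + ξ * b * y') (q := a * u' + ξ * b) (r := a * v')
      (p' := c * A0) (q' := c * A1) (r' := c * A2)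
      (by simp only [map_add, map_mul]; linear_combination h1)
    obtain ⟨E4, E5, E6⟩ := coeff_eq hli
      (p := b * x' + a * y') (q := b * u' + a) (r := b * v')
      (p' := c * B0) (q' := c * B1) (r' := c * B2)
      (by simp only [map_add, map_mul]; linear_combination h2)
    have G1 : A2 * u' + ξ * B2 = A1 * v' := by
      apply mul_left_cancel₀ hc
      linear_combination v' * E2 - u' * E3 - ξ * E6
    have G2 : B2 * u' + A2 = B1 * v' := by
      apply mul_left_cancel₀ hc
      linear_combination v' * E5 - E3 - u' * E6
    have G3 : A2 * x' + ξ * B2 * y' = v' * A0 := by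
      apply mul_left_cancel₀ hc
      linear_combination v' * E1 - x' * E3 - ξ * y' * E6
    have G4 : B2 * x' + A2 * y' = v' * B0 := by
      apply mul_left_cancel₀ hc
      linear_combination v' * E4 - y' * E3 - x' * E6
    have hv'v : v' = v₀ := by
      apply mul_left_cancel₀ hΔ
      linear_combination A2 * G2 - B2 * G1 - A2 * f5 + B2 * f2
    have hu'u : u' = u₀ := by
      apply mul_left_cancel₀ hΔ
      linear_combination A1 * G2 - B1 * G1 - A1 * f5 + B1 * f2
    have hx'x : x' = x₀ := by
      apply mul_left_cancel₀ hD
      linear_combination A2 * G3 - ξ * B2 * G4 - A2 * f1 + ξ * B2 * f4 + (A2*A0 - ξ*B2*B0) * hv'v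
    have hy'y : y' = y₀ := by
      apply mul_left_cancel₀ hD
      linear_combination A2 * G4 - B2 * G3 - A2 * f4 + B2 * f1 + (A2*B0 - B2*A0) * hv'v
    rw [hx'x, hu'u, hv'v, hy'y]
end

section
/- Let φ : E× → GL₃(F) be the injective group homomorphism sending ξ ∈ E× to the matrix of the F-linear map x ↦ ξx of E in the basis (1, d, d²). Then for ξ, η ∈ E×, the matrices φ(ξ) and φ(η) are conjugate in GL₃(F) if and only if η ∈ {ξ, ξ^q, ξ^{q²}}. In particular, a non-central element of the image of φ has exactly three conjugates lying in the image of φ. -/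
open Polynomial

lemma aux_charpoly_units_conj {F : Type*} [CommRing F] {n : Type*} [Fintype n] [DecidableEq n]
    (P : (Matrix n n F)ˣ) (M : Matrix n n F) :
    (P.val * M * (P⁻¹ : (Matrix n n F)ˣ).val).charpoly = M.charpoly := by
  have h1 : (C : F →+* F[X]).mapMatrix P.val *
      (C : F →+* F[X]).mapMatrix ((P⁻¹ : (Matrix n n F)ˣ).val) = 1 := by
    rw [← map_mul, Units.mul_inv, map_one]
  have hcm : Matrix.charmatrix (P.val * M * (P⁻¹ : (Matrix n n F)ˣ).val)
      = (C : F →+* F[X]).mapMatrix P.val * Matrix.charmatrix M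
          * (C : F →+* F[X]).mapMatrix ((P⁻¹ : (Matrix n n F)ˣ).val) := by
    rw [Matrix.charmatrix, Matrix.charmatrix, mul_sub, sub_mul, ← map_mul, ← map_mul]
    congr 1
    symm
    calc (C : F →+* F[X]).mapMatrix P.val * Matrix.scalar n (X : F[X])
          * (C : F →+* F[X]).mapMatrix ((P⁻¹ : (Matrix n n F)ˣ).val)
        = Matrix.scalar n (X : F[X]) * ((C : F →+* F[X]).mapMatrix P.val
            * (C : F →+* F[X]).mapMatrix ((P⁻¹ : (Matrix n n F)ˣ).val)) := by
          rw [← Matrix.scalar_commute (X : F[X]) (fun r' => Commute.all _ _), mul_assoc]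
      _ = Matrix.scalar n (X : F[X]) := by rw [h1, mul_one]
  rw [Matrix.charpoly, Matrix.charpoly, hcm, Matrix.det_mul, Matrix.det_mul]
  rw [mul_comm ((C : F →+* F[X]).mapMatrix P.val).det _, mul_assoc, ← Matrix.det_mul, h1,
    Matrix.det_one, mul_one]

theorem conjugate_in_GL_iff_galois_conjugate (F : Type*) [Field F] [Fintype F]
    (E : Type*) [Field E] [Fintype E] [Algebra F E]
    (h3 : Module.finrank F E = 3)
    (δ : F) (hδ : ¬∃ x : F, x ^ 3 = δ) (d : E) (hd : d ^ 3 = algebraMap F E δ)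
    (B : Module.Basis (Fin 3) F E) (hB0 : B 0 = 1) (hB1 : B 1 = d) (hB2 : B 2 = d ^ 2)
    (q : ℕ) (hq : Fintype.card F = q) :
    (∀ ξ η : Eˣ,
        (∃ P : GL (Fin 3) F,
            LinearMap.toMatrix B B (LinearMap.mulLeft F (η : E)) =
              P.val * LinearMap.toMatrix B B (LinearMap.mulLeft F (ξ : E)) * P⁻¹.val) ↔
          ((η : E) = (ξ : E) ∨ (η : E) = (ξ : E) ^ q ∨ (η : E) = (ξ : E) ^ q ^ 2)) ∧
    (∀ ξ : Eˣ, (ξ : E) ∉ Set.range (algebraMap F E) →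
        Nat.card {N : Matrix (Fin 3) (Fin 3) F //
            (∃ η : Eˣ, N = LinearMap.toMatrix B B (LinearMap.mulLeft F (η : E))) ∧
            (∃ P : GL (Fin 3) F,
              N = P.val * LinearMap.toMatrix B B (LinearMap.mulLeft F (ξ : E)) * P⁻¹.val)} = 3) := by
  classical
  haveI : FiniteDimensional F E := Module.Finite.of_basis B
  -- the matrix map
  let M : E → Matrix (Fin 3) (Fin 3) F := fun x => LinearMap.toMatrix B B (LinearMap.mulLeft F x)
  have Minj : Function.Injective M := by
    intro x y hxy
    have h1 : LinearMap.mulLeft F x = LinearMap.mulLeft F y :=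
      (LinearMap.toMatrix B B).injective hxy
    have h2 := LinearMap.congr_fun h1 1
    simpa using h2
  -- characteristic setup
  obtain ⟨n, hp, hFcard⟩ := FiniteField.card F (ringChar F)
  set p := ringChar F with hpdef
  haveI : Fact p.Prime := ⟨hp⟩
  haveI : CharP E p := charP_of_injective_algebraMap (algebraMap F E).injective p
  haveI : ExpChar E p := ExpChar.prime hp
  have hq' : q = p ^ (n : ℕ) := by rw [← hq, hFcard]
  have hq1 : 1 < q := hq ▸ Fintype.one_lt_card
  -- Frobenius
  let σ : E →+* E := iterateFrobenius E p n
  have hσx : ∀ x : E, σ x = x ^ q := fun x => by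
    rw [show σ x = x ^ p ^ (n : ℕ) from iterateFrobenius_def p n x, ← hq']
  have hσalg : ∀ a : F, σ (algebraMap F E a) = algebraMap F E a := by
    intro a; rw [hσx, ← map_pow, ← hq, FiniteField.pow_card]
  have hσinj : Function.Injective σ := σ.injective
  -- cardinality of E
  have hEcard : Fintype.card E = q ^ 3 := by
    rw [Module.card_eq_pow_finrank (K := F) (V := E), h3, hq]
  have hq3 : ∀ x : E, x ^ q ^ 3 = x := fun x => by
    rw [← hEcard]; exact FiniteField.pow_card x
  have hpow3 : ∀ z : E, ((z ^ q) ^ q) ^ q = z := by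
    intro z
    rw [← pow_mul, ← pow_mul]
    rw [show q * (q * q) = q ^ 3 by ring]
    exact hq3 z
  have hpow2 : ∀ z : E, (z ^ q) ^ q = z ^ q ^ 2 := by
    intro z; rw [← pow_mul, sq]
  -- fixed points of Frobenius are in F
  have memF : ∀ x : E, x ^ q = x → x ∈ Set.range (algebraMap F E) := by
    intro x hx
    set f : E[X] := X ^ q - X with hf
    have hfdeg : f.natDegree = q := FiniteField.X_pow_card_sub_X_natDegree_eq E hq1
    have hfne : f ≠ 0 := FiniteField.X_pow_card_sub_X_ne_zero E hq1
    set s : Finset E := Finset.univ.image (algebraMap F E) with hs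
    have hscard : s.card = q := by
      rw [hs, Finset.card_image_of_injective _ (algebraMap F E).injective,
        Finset.card_univ, hq]
    have hsub : s.val ≤ f.roots := by
      rw [Multiset.le_iff_subset s.nodup]
      intro y hy
      rw [Finset.mem_val, hs, Finset.mem_image] at hy
      obtain ⟨a, -, rfl⟩ := hy
      rw [mem_roots hfne, IsRoot.def, hf]
      rw [eval_sub, eval_pow, eval_X, ← map_pow, ← hq, FiniteField.pow_card, sub_self]
    have heq : s.val = f.roots := by
      apply Multiset.eq_of_le_of_card_le hsub
      have := f.card_roots'
      rw [hfdeg] at this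
      calc Multiset.card f.roots ≤ q := this
        _ = Multiset.card s.val := by rw [← hscard]; rfl
    have hxr : x ∈ f.roots := by
      rw [mem_roots hfne, IsRoot.def, hf, eval_sub, eval_pow, eval_X, hx, sub_self]
    rw [← heq, Finset.mem_val, hs, Finset.mem_image] at hxr
    obtain ⟨a, -, ha⟩ := hxr
    exact ⟨a, ha⟩
  have hdist : ∀ x : E, x ∉ Set.range (algebraMap F E) → x ^ q ≠ x := fun x hx hc => hx (memF x hc)
  -- Cayley-Hamilton
  have haev : ∀ x : E, (aeval x) (M x).charpoly = 0 := by
    intro x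
    have h1 : (M x).charpoly = (LinearMap.mulLeft F x).charpoly :=
      LinearMap.charpoly_toMatrix _ B
    have hml : LinearMap.mulLeft F x = Algebra.lmul F E x := by
      apply LinearMap.ext; intro y; rfl
    rw [h1, hml]
    have h2 := LinearMap.aeval_self_charpoly ((Algebra.lmul F E) x)
    have h3 : Polynomial.aeval ((Algebra.lmul F E) x) (((Algebra.lmul F E) x).charpoly)
        = (Algebra.lmul F E) ((aeval x) (((Algebra.lmul F E) x).charpoly)) :=
      aeval_algHom_apply (Algebra.lmul F E) x _
    rw [h2] at h3
    have h4 := LinearMap.congr_fun h3.symm 1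
    simpa using h4
  -- roots of the charpoly
  have frobstep : ∀ (x z : E), (aeval z) (M x).charpoly = 0 →
      (aeval (z ^ q)) (M x).charpoly = 0 := by
    intro x z hz
    have hcomp : σ.comp (algebraMap F E) = algebraMap F E := RingHom.ext hσalg
    have h0 : σ ((aeval z) (M x).charpoly) = 0 := by rw [hz, map_zero]
    rw [aeval_def, hom_eval₂, hcomp, hσx] at h0
    rwa [aeval_def]
  have hroots : ∀ (x y : E), x ∉ Set.range (algebraMap F E) →
      (aeval y) (M x).charpoly = 0 → y = x ∨ y = x ^ q ∨ y = x ^ q ^ 2 := by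
    intro x y hx hy
    have hmon : (M x).charpoly.Monic := (M x).charpoly_monic
    have hdeg : (M x).charpoly.natDegree = 3 := by
      rw [Matrix.charpoly_natDegree_eq_dim, Fintype.card_fin]
    have hx0 : (aeval x) (M x).charpoly = 0 := haev x
    have hx1 := frobstep x x hx0
    have hx2 := frobstep x _ hx1
    rw [hpow2] at hx2
    have d01 : x ≠ x ^ q := fun h => hdist x hx h.symm
    have d02 : x ≠ x ^ q ^ 2 := by
      intro h
      apply hdist x hx
      calc x ^ q = (x ^ q ^ 2) ^ q := by rw [← h]
        _ = ((x ^ q) ^ q) ^ q := by rw [← hpow2 x]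
        _ = x := hpow3 x
    have d12 : x ^ q ≠ x ^ q ^ 2 := by
      intro h
      apply hdist x hx
      have h' : σ (σ x) = σ x := by
        calc σ (σ x) = (x ^ q) ^ q := by rw [hσx x, hσx]
          _ = x ^ q ^ 2 := hpow2 x
          _ = x ^ q := h.symm
          _ = σ x := (hσx x).symm
      have h'' := hσinj h'
      rw [← hσx x]
      exact h''
    set pE : E[X] := (M x).charpoly.map (algebraMap F E) with hpE
    have hpEne : pE ≠ 0 := (hmon.map _).ne_zero
    have hpEdeg : pE.natDegree = 3 := by rw [hpE, hmon.natDegree_map, hdeg]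
    have hmemroots : ∀ z : E, (aeval z) (M x).charpoly = 0 → z ∈ pE.roots := by
      intro z hz
      rw [mem_roots hpEne, IsRoot.def, hpE, eval_map, ← aeval_def]
      exact hz
    set s : Finset E := {x, x ^ q, x ^ q ^ 2} with hs
    have hscard : s.card = 3 := by
      rw [hs, Finset.card_insert_of_notMem (by simp [d01, d02]),
        Finset.card_insert_of_notMem (by simp [d12]), Finset.card_singleton]
    have hsub : s.val ≤ pE.roots := by
      rw [Multiset.le_iff_subset s.nodup]
      intro z hz
      rw [Finset.mem_val, hs] at hz
      simp only [Finset.mem_insert, Finset.mem_singleton] at hz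
      rcases hz with rfl | rfl | rfl
      · exact hmemroots _ hx0
      · exact hmemroots _ hx1
      · exact hmemroots _ hx2
    have hcard3 : Multiset.card pE.roots ≤ 3 := hpEdeg ▸ pE.card_roots'
    have heq : s.val = pE.roots := by
      apply Multiset.eq_of_le_of_card_le hsub
      calc Multiset.card pE.roots ≤ 3 := hcard3
        _ = Multiset.card s.val := by rw [← hscard]; rfl
    have hmem : y ∈ s := by
      rw [← Finset.mem_val, heq]
      exact hmemroots y hy
    simpa [hs] using hmem
  -- backward construction
  have key : ∀ (x y : E) (τ : E →+* E), (∀ a : F, τ (algebraMap F E a) = algebraMap F E a) →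
      τ x = y → ∃ P : GL (Fin 3) F, M y = P.val * M x * P⁻¹.val := by
    intro x y τ hτalg hτx
    have hbij : Function.Bijective τ := Finite.injective_iff_bijective.mp τ.injective
    let e : E ≃+* E := RingEquiv.ofBijective τ hbij
    have he : ∀ z : E, e z = τ z := fun z => rfl
    let g : E →ₗ[F] E :=
      { toFun := τ
        map_add' := map_add τ
        map_smul' := by
          intro a z
          simp only [RingHom.id_apply, Algebra.smul_def, map_mul, hτalg] }
    let ginv : E →ₗ[F] E :=
      { toFun := e.symm
        map_add' := map_add e.symm
        map_smul' := by
          intro a z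
          simp only [RingHom.id_apply, Algebra.smul_def]
          apply e.injective
          rw [RingEquiv.apply_symm_apply, map_mul, RingEquiv.apply_symm_apply]
          rw [show e (algebraMap F E a) = algebraMap F E a from hτalg a] }
    have hgg : g ∘ₗ ginv = LinearMap.id := by
      apply LinearMap.ext; intro z
      show τ (e.symm z) = z
      rw [← he, e.apply_symm_apply]
    have hgg' : ginv ∘ₗ g = LinearMap.id := by
      apply LinearMap.ext; intro z
      show e.symm (τ z) = z
      rw [← he, e.symm_apply_apply]
    have hPQ : LinearMap.toMatrix B B g * LinearMap.toMatrix B B ginv = 1 := by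
      rw [← LinearMap.toMatrix_comp B B B, hgg, LinearMap.toMatrix_id]
    have hQP : LinearMap.toMatrix B B ginv * LinearMap.toMatrix B B g = 1 := by
      rw [← LinearMap.toMatrix_comp B B B, hgg', LinearMap.toMatrix_id]
    refine ⟨⟨LinearMap.toMatrix B B g, LinearMap.toMatrix B B ginv, hPQ, hQP⟩, ?_⟩
    show M y = LinearMap.toMatrix B B g * M x * LinearMap.toMatrix B B ginv
    rw [show M x = LinearMap.toMatrix B B (LinearMap.mulLeft F x) from rfl,
      ← LinearMap.toMatrix_comp B B B, ← LinearMap.toMatrix_comp B B B]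
    show LinearMap.toMatrix B B (LinearMap.mulLeft F y) = _
    congr 1
    apply LinearMap.ext; intro z
    show y * z = τ (x * e.symm z)
    rw [map_mul, hτx, ← he, e.apply_symm_apply]
  -- part 1
  have part1 : ∀ ξ η : Eˣ,
      (∃ P : GL (Fin 3) F, M (η : E) = P.val * M (ξ : E) * P⁻¹.val) ↔
        ((η : E) = (ξ : E) ∨ (η : E) = (ξ : E) ^ q ∨ (η : E) = (ξ : E) ^ q ^ 2) := by
    intro ξ η
    constructor
    · rintro ⟨P, hP⟩
      by_cases hF : (ξ : E) ∈ Set.range (algebraMap F E)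
      · left
        obtain ⟨a, ha⟩ := hF
        have h1 : LinearMap.mulLeft F (ξ : E) = a • LinearMap.id := by
          apply LinearMap.ext; intro z
          rw [LinearMap.mulLeft_apply, LinearMap.smul_apply, LinearMap.id_apply,
            Algebra.smul_def, ha]
        have h2 : M (ξ : E) = a • 1 := by
          show LinearMap.toMatrix B B (LinearMap.mulLeft F (ξ : E)) = a • 1
          rw [h1, map_smul, LinearMap.toMatrix_id]
        apply Minj
        rw [hP, h2, Matrix.mul_smul, Matrix.smul_mul, mul_one, Units.mul_inv]
      · have hchar : (M (η : E)).charpoly = (M (ξ : E)).charpoly := by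
          rw [hP]; exact aux_charpoly_units_conj P (M (ξ : E))
        have hy : (aeval (η : E)) (M (ξ : E)).charpoly = 0 := by
          rw [← hchar]; exact haev _
        exact hroots _ _ hF hy
    · rintro (h | h | h)
      · refine ⟨1, ?_⟩
        rw [h]
        simp
      · exact key _ _ σ hσalg (by rw [hσx, ← h])
      · refine key _ _ (iterateFrobenius E p (n * 2)) ?_ ?_
        · intro a
          have : iterateFrobenius E p (n * 2) (algebraMap F E a)
              = algebraMap F E (a ^ q ^ 2) := by
            rw [iterateFrobenius_def, pow_mul, ← hq', ← map_pow]
          rw [this, ← hq, sq, pow_mul, FiniteField.pow_card, FiniteField.pow_card]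
        · rw [iterateFrobenius_def, pow_mul, ← hq', ← h]
  constructor
  · exact part1
  · intro ξ hξ
    have d01 : (ξ : E) ≠ (ξ : E) ^ q := fun h => hdist _ hξ h.symm
    have d02 : (ξ : E) ≠ (ξ : E) ^ q ^ 2 := by
      intro h
      apply hdist _ hξ
      calc (ξ : E) ^ q = ((ξ : E) ^ q ^ 2) ^ q := by rw [← h]
        _ = (((ξ : E) ^ q) ^ q) ^ q := by rw [← hpow2 (ξ : E)]
        _ = (ξ : E) := hpow3 _
    have d12 : (ξ : E) ^ q ≠ (ξ : E) ^ q ^ 2 := by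
      intro h
      apply hdist _ hξ
      have h' : σ (σ (ξ : E)) = σ (ξ : E) := by
        calc σ (σ (ξ : E)) = ((ξ : E) ^ q) ^ q := by rw [hσx (ξ : E), hσx]
          _ = (ξ : E) ^ q ^ 2 := hpow2 _
          _ = (ξ : E) ^ q := h.symm
          _ = σ (ξ : E) := (hσx _).symm
      have h'' := hσinj h'
      rw [← hσx (ξ : E)]
      exact h''
    have hsetEq : {N : Matrix (Fin 3) (Fin 3) F |
        (∃ η : Eˣ, N = M (η : E)) ∧
          ∃ P : GL (Fin 3) F, N = P.val * M (ξ : E) * P⁻¹.val}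
        = {M (ξ : E), M ((ξ : E) ^ q), M ((ξ : E) ^ q ^ 2)} := by
      ext N
      simp only [Set.mem_setOf_eq, Set.mem_insert_iff, Set.mem_singleton_iff]
      constructor
      · rintro ⟨⟨η, rfl⟩, P, hP⟩
        rcases (part1 ξ η).mp ⟨P, hP⟩ with h | h | h
        · left; rw [h]
        · right; left; rw [h]
        · right; right; rw [h]
      · intro h
        have hcases : ∃ η : Eˣ, N = M (η : E) ∧
            ((η : E) = (ξ : E) ∨ (η : E) = (ξ : E) ^ q ∨ (η : E) = (ξ : E) ^ q ^ 2) := by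
          rcases h with h | h | h
          · exact ⟨ξ, h, Or.inl rfl⟩
          · exact ⟨ξ ^ q, by rw [h, Units.val_pow_eq_pow_val], Or.inr (Or.inl (Units.val_pow_eq_pow_val ξ q))⟩
          · exact ⟨ξ ^ q ^ 2, by rw [h, Units.val_pow_eq_pow_val], Or.inr (Or.inr (Units.val_pow_eq_pow_val ξ (q ^ 2)))⟩
        obtain ⟨η, hN, hη⟩ := hcases
        obtain ⟨P, hP⟩ := (part1 ξ η).mpr hη
        exact ⟨⟨η, hN⟩, P, by rw [hN, hP]⟩
    have hcount : Nat.card {N : Matrix (Fin 3) (Fin 3) F //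
        (∃ η : Eˣ, N = M (η : E)) ∧
          ∃ P : GL (Fin 3) F, N = P.val * M (ξ : E) * P⁻¹.val} =
        ({M (ξ : E), M ((ξ : E) ^ q), M ((ξ : E) ^ q ^ 2)} : Set _).ncard := by
      rw [← Nat.card_coe_set_eq, ← hsetEq]
      rfl
    refine hcount.trans ?_
    exact Set.ncard_eq_three.mpr ⟨_, _, _, Minj.ne d01, Minj.ne d02, Minj.ne d12, rfl⟩
end
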